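/- arXiv:1409.5348 — 5 statements merged into one kernel-verified Lean document; each statement's English description precedes it below -/
import Mathlib

section
/- Let X be a real Banach space and {C_n : n ∈ ℕ} a family of closed connected subsets of X. Assume: (i) there exist points z_n ∈ C_n for each n and z_* ∈ X with z_n → z_*; (ii) lim_{n→∞} sup{‖u‖ : u ∈ C_n} = ∞; (iii) for every ρ > 0, the set (⋃_{n=1}^∞ C_n) ∩ B_ρ is relatively compact in X, where B_ρ is the closed ball of radius ρ centered at the origin. Then the superior limit 𝒟 := {x ∈ X : there exist a subsequence (n_k) and points x_{n_k} ∈ C_{n_k} with x_{n_k} → x} contains a connected component 𝒞 which is unbounded and satisfies z_* ∈ 𝒞. -/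
open Set Filter Topology
open Metric

lemma mem_limsup_of_approx {X : Type*} [MetricSpace X] (C : ℕ → Set X) (x : X)
    (h : ∀ ε : ℝ, 0 < ε → ∀ N : ℕ, ∃ n ≥ N, ∃ p ∈ C n, dist p x < ε) :
    ∃ φ : ℕ → ℕ, StrictMono φ ∧
      ∃ y : ℕ → X, (∀ j, y j ∈ C (φ j)) ∧ Tendsto y atTop (nhds x) := by
  have H : ∀ k N : ℕ, ∃ n ≥ N, ∃ p ∈ C n, dist p x < 1 / (k + 1) := by
    intro k N
    exact h (1 / (k + 1)) (by positivity) N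
  choose n hn p hp hd using H
  let Nf : ℕ → ℕ := fun k => Nat.rec 0 (fun k ih => n k ih + 1) k
  have hNf : ∀ k, Nf (k + 1) = n k (Nf k) + 1 := fun k => rfl
  refine ⟨fun k => n k (Nf k), ?_, fun k => p k (Nf k), fun k => hp k (Nf k), ?_⟩
  · apply strictMono_nat_of_lt_succ
    intro k
    have h1 := hNf k
    have h2 := hn (k + 1) (Nf (k + 1))
    show n k (Nf k) < n (k + 1) (Nf (k + 1))
    omega
  · rw [tendsto_iff_dist_tendsto_zero]
    apply squeeze_zero (fun k => dist_nonneg) (fun k => (hd k (Nf k)).le)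
    exact tendsto_one_div_add_atTop_nhds_zero_nat

lemma preconn_frontier {X : Type*} [TopologicalSpace X] {s V : Set X}
    (hs : IsPreconnected s) (hV : IsOpen V) (h1 : (s ∩ V).Nonempty)
    (h2 : (s \ V).Nonempty) : (s ∩ frontier V).Nonempty := by
  by_contra hfr
  rw [not_nonempty_iff_eq_empty] at hfr
  have hsub : s ⊆ V ∪ (closure V)ᶜ := by
    intro x hx
    rcases Classical.em (x ∈ V) with h | h
    · exact Or.inl h
    · refine Or.inr fun hc => ?_
      have : x ∈ s ∩ frontier V := ⟨hx, hc, by rwa [hV.interior_eq]⟩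
      rw [hfr] at this; exact this
  have h2' : (s ∩ (closure V)ᶜ).Nonempty := by
    obtain ⟨w, hws, hwV⟩ := h2
    refine ⟨w, hws, fun hc => ?_⟩
    have : w ∈ s ∩ frontier V := ⟨hws, hc, by rwa [hV.interior_eq]⟩
    rw [hfr] at this; exact this
  obtain ⟨q, _, hq1, hq2⟩ := hs V (closure V)ᶜ hV (isClosed_closure.isOpen_compl) hsub h1 h2'
  exact hq2 (subset_closure hq1)

/-- Lemma 2.1 of Ma–An type. Let `X` be a real Banach space and
`C n` a family of closed connected subsets of `X`. Under (i) existence of points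
`z n ∈ C n` converging to `zstar`, (ii) `sup {‖u‖ : u ∈ C n} → ∞`, and
(iii) relative compactness of `(⋃ n, C n) ∩ B_ρ` for every `ρ > 0`, the superior
limit `𝒟` of the sets `C n` contains an unbounded connected component containing
`zstar`. -/
theorem stmt4 (X : Type*) [NormedAddCommGroup X] [NormedSpace ℝ X] [CompleteSpace X]
    (C : ℕ → Set X) (hclosed : ∀ n, IsClosed (C n)) (hconn : ∀ n, IsConnected (C n))
    (z : ℕ → X) (hz : ∀ n, z n ∈ C n) (zstar : X)
    (hzlim : Tendsto z atTop (nhds zstar))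
    (hunbdd : ∀ M : ℝ, ∃ N₀ : ℕ, ∀ n ≥ N₀, ∃ u ∈ C n, M < ‖u‖)
    (hcpt : ∀ ρ > 0, IsCompact (closure ((⋃ n, C n) ∩ Metric.closedBall 0 ρ))) :
    ∃ 𝒞 : Set X,
      𝒞 ⊆ {x | ∃ φ : ℕ → ℕ, StrictMono φ ∧
            ∃ y : ℕ → X, (∀ j, y j ∈ C (φ j)) ∧ Tendsto y atTop (nhds x)} ∧
      IsConnected 𝒞 ∧
      (∀ 𝒞' : Set X, 𝒞 ⊆ 𝒞' →
        𝒞' ⊆ {x | ∃ φ : ℕ → ℕ, StrictMono φ ∧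
              ∃ y : ℕ → X, (∀ j, y j ∈ C (φ j)) ∧ Tendsto y atTop (nhds x)} →
        IsConnected 𝒞' → 𝒞' = 𝒞) ∧
      ¬ Bornology.IsBounded 𝒞 ∧ zstar ∈ 𝒞 := by
  set 𝒟 : Set X := {x | ∃ φ : ℕ → ℕ, StrictMono φ ∧
      ∃ y : ℕ → X, (∀ j, y j ∈ C (φ j)) ∧ Tendsto y atTop (nhds x)} with h𝒟def
  have hzD : zstar ∈ 𝒟 := ⟨id, strictMono_id, z, hz, hzlim⟩
  -- 𝒟 is closed
  have hDclosed : IsClosed 𝒟 := by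
    apply isClosed_of_closure_subset
    intro x hx
    apply mem_limsup_of_approx
    intro ε hε N
    obtain ⟨d, hd𝒟, hdist⟩ := Metric.mem_closure_iff.mp hx (ε/2) (by linarith)
    obtain ⟨φ, hφ, y, hyC, hy⟩ := hd𝒟
    have hev : ∀ᶠ j in atTop, dist (y j) d < ε/2 :=
      (tendsto_iff_dist_tendsto_zero.mp hy).eventually_lt_const (by linarith)
    obtain ⟨J, hJ⟩ := eventually_atTop.mp hev
    refine ⟨φ (max J N), le_trans (le_max_right J N) hφ.le_apply, y (max J N), hyC _, ?_⟩
    have h1 := hJ (max J N) (le_max_left _ _)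
    rw [dist_comm] at hdist
    calc dist (y (max J N)) x ≤ dist (y (max J N)) d + dist d x := dist_triangle _ _ _
      _ < ε/2 + ε/2 := by linarith
      _ = ε := by ring
  set 𝒞 := connectedComponentIn 𝒟 zstar with h𝒞def
  have hz𝒞 : zstar ∈ 𝒞 := mem_connectedComponentIn hzD
  refine ⟨𝒞, connectedComponentIn_subset _ _, ⟨⟨zstar, hz𝒞⟩, isPreconnected_connectedComponentIn⟩,
    ?_, ?_, hz𝒞⟩
  · intro 𝒞' h1 h2 h3
    exact subset_antisymm
      (h3.isPreconnected.subset_connectedComponentIn (h1 hz𝒞) h2) h1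
  intro hbd
  obtain ⟨r, hr⟩ := hbd.subset_closedBall 0
  set r1 : ℝ := max r 0 with hr1def
  have hr1nn : (0:ℝ) ≤ r1 := le_max_right _ _
  have hr1 : 𝒞 ⊆ closedBall 0 r1 :=
    hr.trans (closedBall_subset_closedBall (le_max_left _ _))
  set ρ' : ℝ := r1 + 1 with hρ'def
  set ρ : ℝ := r1 + 2 with hρdef
  have hρpos : (0:ℝ) < ρ + 1 := by simp only [hρdef]; linarith
  set L := closure ((⋃ n, C n) ∩ Metric.closedBall 0 (ρ + 1)) with hLdef
  have hL : IsCompact L := hcpt (ρ + 1) hρpos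
  set K := 𝒟 ∩ Metric.closedBall 0 ρ with hKdef
  have hKL : K ⊆ L := by
    rintro x ⟨⟨φ, hφ, y, hyC, hy⟩, hxball⟩
    apply mem_closure_of_tendsto hy
    have hev : ∀ᶠ j in atTop, dist (y j) x < 1 :=
      (tendsto_iff_dist_tendsto_zero.mp hy).eventually_lt_const one_pos
    filter_upwards [hev] with j hj
    refine ⟨mem_iUnion.mpr ⟨φ j, hyC j⟩, ?_⟩
    rw [mem_closedBall] at hxball ⊢
    calc dist (y j) 0 ≤ dist (y j) x + dist x 0 := dist_triangle _ _ _
      _ ≤ 1 + ρ := add_le_add hj.le hxball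
      _ = ρ + 1 := by ring
  have hKcpt : IsCompact K :=
    hL.of_isClosed_subset (hDclosed.inter isClosed_closedBall) hKL
  have hzK : zstar ∈ K := by
    refine ⟨hzD, ?_⟩
    have := hr1 hz𝒞
    exact closedBall_subset_closedBall (by simp only [hρdef]; linarith) this
  have h𝒞K : 𝒞 ⊆ K := by
    intro x hx
    exact ⟨connectedComponentIn_subset _ _ hx,
      closedBall_subset_closedBall (by simp only [hρdef]; linarith) (hr1 hx)⟩
  -- 𝒞 is also the connected component of zstar in K
  have hiso : 𝒞 = connectedComponentIn K zstar := by
    apply subset_antisymm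
    · exact (isPreconnected_connectedComponentIn).subset_connectedComponentIn hz𝒞 h𝒞K
    · exact (isPreconnected_connectedComponentIn).subset_connectedComponentIn
        (mem_connectedComponentIn hzK)
        ((connectedComponentIn_subset K zstar).trans inter_subset_left)
  haveI : CompactSpace ↥K := isCompact_iff_compactSpace.mp hKcpt
  set x₀ : ↥K := ⟨zstar, hzK⟩ with hx₀def
  have hcc : 𝒞 = Subtype.val '' connectedComponent x₀ :=
    hiso.trans (connectedComponentIn_eq_image hzK)
  -- B: the points of K with norm ≥ ρ'
  set B : Set ↥K := {w | ρ' ≤ ‖(w : X)‖} with hBdef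
  have hBclosed : IsClosed B :=
    isClosed_le continuous_const (continuous_norm.comp continuous_subtype_val)
  have hdisj : B ∩ ⋂ (Z : {Z : Set ↥K // IsClopen Z ∧ x₀ ∈ Z}), (Z : Set ↥K) = ∅ := by
    rw [← connectedComponent_eq_iInter_isClopen x₀]
    ext w
    simp only [mem_inter_iff, mem_empty_iff_false, iff_false, not_and]
    intro hwB hwc
    have : (w : X) ∈ 𝒞 := hcc ▸ mem_image_of_mem _ hwc
    have hnorm : ‖(w : X)‖ ≤ r1 := mem_closedBall_zero_iff.mp (hr1 this)
    have : ρ' ≤ ‖(w : X)‖ := hwB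
    simp only [hρ'def] at this
    linarith
  obtain ⟨t, ht⟩ := hBclosed.isCompact.elim_finite_subfamily_closed _
    (fun Z => Z.2.1.1) hdisj
  set U' : Set ↥K := ⋂ Z ∈ t, (Z : Set ↥K) with hU'def
  have hU'clopen : IsClopen U' := isClopen_biInter_finset fun Z _ => Z.2.1
  have hx₀U' : x₀ ∈ U' := mem_iInter₂.mpr fun Z _ => Z.2.2
  have hccU' : connectedComponent x₀ ⊆ U' :=
    subset_iInter₂ fun Z _ => Z.2.1.connectedComponent_subset Z.2.2
  have hU'norm : ∀ w ∈ U', ‖(w : X)‖ < ρ' := by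
    intro w hw
    by_contra hcon
    have : w ∈ B ∩ ⋂ Z ∈ t, (Z : Set ↥K) := ⟨le_of_not_gt hcon, hw⟩
    rw [ht] at this
    exact this
  set U : Set X := Subtype.val '' U' with hUdef
  have hUK : U ⊆ K := by rintro u ⟨w, _, rfl⟩; exact w.2
  have h𝒞U : 𝒞 ⊆ U := hcc ▸ image_mono hccU'
  have hUne : U.Nonempty := ⟨zstar, x₀, hx₀U', rfl⟩
  have hUcpt : IsCompact U :=
    (hU'clopen.isClosed.isCompact).image continuous_subtype_val
  have hUclosed : IsClosed U := hUcpt.isClosed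
  have hUnorm : ∀ u ∈ U, ‖u‖ < ρ' := by rintro u ⟨w, hw, rfl⟩; exact hU'norm w hw
  have hKUcpt : IsCompact (K \ U) := by
    have heq : K \ U = Subtype.val '' (U'ᶜ) := by
      ext x
      constructor
      · rintro ⟨hxK, hxU⟩
        exact ⟨⟨x, hxK⟩, fun hc => hxU ⟨⟨x, hxK⟩, hc, rfl⟩, rfl⟩
      · rintro ⟨w, hw, rfl⟩
        refine ⟨w.2, fun hc => ?_⟩
        obtain ⟨w', hw', hww'⟩ := hc
        have : w' = w := Subtype.ext hww'
        exact hw (this ▸ hw')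
    rw [heq]
    exact (hU'clopen.isOpen.isClosed_compl.isCompact).image continuous_subtype_val
  -- positive separation between U and K \ U
  have hδ : ∃ δ > 0, ∀ y ∈ K \ U, δ ≤ infDist y U := by
    rcases (K \ U).eq_empty_or_nonempty with he | hne
    · exact ⟨1, one_pos, by rw [he]; simp⟩
    · obtain ⟨y₀, hy₀, hmin⟩ := hKUcpt.exists_isMinOn hne
        (continuous_infDist_pt U).continuousOn
      refine ⟨infDist y₀ U, ?_, fun y hy => hmin hy⟩
      exact (hUclosed.notMem_iff_infDist_pos hUne).mp hy₀.2
  obtain ⟨δ, hδpos, hδsep⟩ := hδ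
  set ε : ℝ := min (δ / 2) 1 with hεdef
  have hεpos : 0 < ε := lt_min (by linarith) one_pos
  have hεδ : ε < δ := (min_le_left _ _).trans_lt (by linarith)
  have hε1 : ε ≤ 1 := min_le_right _ _
  set V : Set X := {y | infDist y U < ε} with hVdef
  have hVopen : IsOpen V := isOpen_lt (continuous_infDist_pt U) continuous_const
  have hUV : U ⊆ V := fun u hu => by
    show infDist u U < ε
    rw [infDist_zero_of_mem hu]; exact hεpos
  have hVnorm : ∀ y ∈ V, ‖y‖ < ρ := by
    intro y hy
    obtain ⟨u, huU, hdu⟩ := (infDist_lt_iff hUne).mp hy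
    have h1 : ‖u‖ < ρ' := hUnorm u huU
    calc ‖y‖ ≤ ‖u‖ + dist y u := by
          rw [dist_eq_norm]
          calc ‖y‖ = ‖u + (y - u)‖ := by rw [add_sub_cancel]
            _ ≤ ‖u‖ + ‖y - u‖ := norm_add_le _ _
      _ < ρ' + ε := by linarith
      _ ≤ ρ := by simp only [hρ'def, hρdef]; linarith
  have hclosV : closure V ⊆ {y | infDist y U ≤ ε} :=
    closure_minimal (fun y (hy : infDist y U < ε) => hy.le)
      (isClosed_le (continuous_infDist_pt U) continuous_const)
  have hKV : ∀ x ∈ K, x ∈ closure V → x ∈ U := by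
    intro x hxK hxcl
    by_contra hxU
    have h1 : δ ≤ infDist x U := hδsep x ⟨hxK, hxU⟩
    have h2 : infDist x U ≤ ε := hclosV hxcl
    linarith
  -- closure V is bounded by ρ
  have hVball : closure V ⊆ closedBall 0 ρ :=
    closure_minimal (fun y hy => mem_closedBall_zero_iff.mpr (hVnorm y hy).le)
      isClosed_closedBall
  -- the main contradiction
  obtain ⟨N₀, hN₀⟩ := hunbdd ρ
  have hzVmem : zstar ∈ V := hUV (h𝒞U hz𝒞)
  obtain ⟨N₁, hN₁⟩ := eventually_atTop.mp (hzlim.eventually_mem (hVopen.mem_nhds hzVmem))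
  set N₂ := max N₀ N₁ with hN₂def
  have hfr : ∀ k : ℕ, ∃ x ∈ C (N₂ + k), x ∈ frontier V := by
    intro k
    have hn1 : N₂ + k ≥ N₀ := le_trans (le_max_left _ _) (Nat.le_add_right _ _)
    have hn2 : N₂ + k ≥ N₁ := le_trans (le_max_right _ _) (Nat.le_add_right _ _)
    obtain ⟨u, huC, hu⟩ := hN₀ (N₂ + k) hn1
    have huV : u ∉ V := fun hc => absurd (hVnorm u hc) (not_lt.mpr hu.le)
    obtain ⟨x, hx1, hx2⟩ := preconn_frontier (hconn (N₂ + k)).isPreconnected hVopen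
      ⟨z (N₂ + k), hz _, hN₁ _ hn2⟩ ⟨u, huC, huV⟩
    exact ⟨x, hx1, hx2⟩
  choose w hwC hwF using hfr
  have hwL : ∀ k, w k ∈ L := by
    intro k
    apply subset_closure
    refine ⟨mem_iUnion.mpr ⟨N₂ + k, hwC k⟩, ?_⟩
    have : w k ∈ closedBall 0 ρ := hVball (hwF k).1
    exact closedBall_subset_closedBall (by linarith) this
  obtain ⟨x, hxL, ψ, hψ, htend⟩ := hL.tendsto_subseq hwL
  have hxD : x ∈ 𝒟 := by
    refine ⟨fun k => N₂ + ψ k, fun a b hab => by simpa using hψ hab,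
      fun k => w (ψ k), fun k => hwC (ψ k), htend⟩
  have hxF : x ∈ frontier V :=
    isClosed_frontier.mem_of_tendsto htend (Eventually.of_forall fun k => hwF (ψ k))
  have hxK : x ∈ K := ⟨hxD, hVball hxF.1⟩
  have hxU : x ∈ U := hKV x hxK hxF.1
  exact hxF.2 (by rw [hVopen.interior_eq]; exact hUV hxU)
end

section
/- Let N ≥ 2 be an integer, 0 ≤ δ < R, λ ≥ 0, and let f : [δ,R] × ℝ → ℝ be continuous, Lipschitz continuous in its second variable on bounded sets, with f(r,0) = 0 for all r ∈ [δ,R]. Let τ ∈ (δ,R) and let u ∈ C¹([δ,R]) with |u'(r)| < 1 for all r be such that r ↦ r^{N−1}φ₁(u'(r)) is continuously differentiable, (r^{N−1}φ₁(u'))' + λ r^{N−1} f(r,u) = 0 on (δ,R), and u(τ) = u'(τ) = 0. Then u ≡ 0 on [δ,R]. -/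
open Set Filter Topology

/-- `φ₁(s) = s / √(1 - s²)`. -/
noncomputable def phi1 (s : ℝ) : ℝ := s / Real.sqrt (1 - s ^ 2)

/-- Condition (A1): `f : [0,R] × (-α,α) → ℝ` is continuous, `R < α ≤ ∞`, and
`f(r,s) s > 0` for `r ∈ [0,R]` and `0 < |s| < α`. -/
def CondA1 (R : ℝ) (α : EReal) (f : ℝ → ℝ → ℝ) : Prop :=
  (R : EReal) < α ∧
  ContinuousOn (fun p : ℝ × ℝ => f p.1 p.2)
    {p : ℝ × ℝ | p.1 ∈ Icc 0 R ∧ ((|p.2| : ℝ) : EReal) < α} ∧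
  ∀ r ∈ Icc 0 R, ∀ s : ℝ, ((|s| : ℝ) : EReal) < α → s ≠ 0 → 0 < f r s * s

/-- Condition (A2): `f(r,s)/s → m(r)` as `s → 0`, uniformly in `r ∈ [δ,R]`, with
`m` continuous, nonnegative, and not identically zero on any nondegenerate
subinterval of `[δ,R]`. -/
def CondA2 (δ R : ℝ) (f : ℝ → ℝ → ℝ) (m : ℝ → ℝ) : Prop :=
  ContinuousOn m (Icc δ R) ∧
  (∀ r ∈ Icc δ R, 0 ≤ m r) ∧
  (∀ a b : ℝ, δ ≤ a → a < b → b ≤ R → ∃ r ∈ Icc a b, m r ≠ 0) ∧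
  ∀ ε : ℝ, 0 < ε → ∃ η : ℝ, 0 < η ∧
    ∀ r ∈ Icc δ R, ∀ s : ℝ, s ≠ 0 → |s| < η → |f r s / s - m r| < ε

/-- Condition (A3): `f(r,0) = 0` and `f(r,s)/φ₁(s) → ∞` as `s → 0`, uniformly in
`r ∈ [δ,R]`. -/
def CondA3 (δ R : ℝ) (f : ℝ → ℝ → ℝ) : Prop :=
  (∀ r ∈ Icc δ R, f r 0 = 0) ∧
  ∀ M : ℝ, ∃ η : ℝ, 0 < η ∧
    ∀ r ∈ Icc δ R, ∀ s : ℝ, s ≠ 0 → |s| < η → M < f r s / phi1 s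

/-- Condition (A4): `F(r,s) = ∫₀^s f(r,x) dx` is differentiable in `r ∈ [δ,R]` and
`|∂F/∂r(r,s)| ≤ ω(r) F(r,s)` for a continuous nonnegative `ω`. -/
def CondA4 (δ R : ℝ) (α : EReal) (f : ℝ → ℝ → ℝ) : Prop :=
  ∃ Fr : ℝ → ℝ → ℝ, ∃ ω : ℝ → ℝ,
    ContinuousOn ω (Icc δ R) ∧ (∀ r ∈ Icc δ R, 0 ≤ ω r) ∧
    ∀ s : ℝ, ((|s| : ℝ) : EReal) < α →
      (∀ r ∈ Icc δ R,
        HasDerivWithinAt (fun t => ∫ x in (0:ℝ)..s, f t x) (Fr r s) (Icc δ R) r) ∧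
      (∀ r ∈ Icc δ R, |Fr r s| ≤ ω r * ∫ x in (0:ℝ)..s, f r x)

/-- `u` (with derivative `u'`) is a solution of problem `(P)_{δ,λ}`:
`u ∈ C¹([δ,R])`, `|u'| < 1`, `r ↦ r^{N-1} φ₁(u'(r))` is continuously
differentiable, `(r^{N-1} φ₁(u'))' + λ r^{N-1} f(r,u) = 0` on `(δ,R)`, and
`u'(δ) = 0 = u(R)`. -/
def IsSolP (N : ℕ) (δ R lam : ℝ) (f : ℝ → ℝ → ℝ) (u u' : ℝ → ℝ) : Prop :=
  (∀ r ∈ Icc δ R, HasDerivWithinAt u (u' r) (Icc δ R) r) ∧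
  ContinuousOn u' (Icc δ R) ∧
  (∀ r ∈ Icc δ R, |u' r| < 1) ∧
  (∃ w' : ℝ → ℝ, ContinuousOn w' (Icc δ R) ∧
    (∀ r ∈ Icc δ R,
      HasDerivWithinAt (fun t => t ^ (N - 1) * phi1 (u' t)) (w' r) (Icc δ R) r) ∧
    ∀ r ∈ Ioo δ R, w' r + lam * r ^ (N - 1) * f r (u r) = 0) ∧
  u' δ = 0 ∧ u R = 0

/-- `u ∈ S^ν_{k,δ}`: `u'(δ) = u(R) = 0`, `u` has exactly `k-1` zeros in `(δ,R)`,
all simple (`u' ≠ 0` there), and `ν u > 0` on some interval `(δ, δ+σ)`. -/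
def InS (δ R : ℝ) (k : ℕ) (ν : ℝ) (u u' : ℝ → ℝ) : Prop :=
  u' δ = 0 ∧ u R = 0 ∧
  (∃ Z : Finset ℝ, Z.card = k - 1 ∧
    (∀ r : ℝ, r ∈ Z ↔ r ∈ Ioo δ R ∧ u r = 0) ∧
    ∀ r ∈ Z, u' r ≠ 0) ∧
  ∃ σ : ℝ, 0 < σ ∧ ∀ r ∈ Ioo δ (δ + σ), 0 < ν * u r

/-- `w` (with derivative `w'`) is a solution of the linear problem
`-(r^{N-1} w')' = λ r^{N-1} m(r) w` on `(δ,R)` with `w'(δ) = w(R) = 0`. -/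
def IsLinSol (N : ℕ) (δ R lam : ℝ) (m : ℝ → ℝ) (w w' : ℝ → ℝ) : Prop :=
  (∀ r ∈ Icc δ R, HasDerivWithinAt w (w' r) (Icc δ R) r) ∧
  ContinuousOn w' (Icc δ R) ∧
  (∃ g : ℝ → ℝ, ContinuousOn g (Icc δ R) ∧
    (∀ r ∈ Icc δ R,
      HasDerivWithinAt (fun t => t ^ (N - 1) * w' t) (g r) (Icc δ R) r) ∧
    ∀ r ∈ Ioo δ R, -g r = lam * r ^ (N - 1) * m r * w r) ∧
  w' δ = 0 ∧ w R = 0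

/-- `lam` is the `k`-th eigenvalue of the linear problem: it is positive and the
problem admits a nontrivial solution having exactly `k-1` simple zeros in
`(δ,R)`. -/
def IsKthEigen (N : ℕ) (δ R : ℝ) (m : ℝ → ℝ) (k : ℕ) (lam : ℝ) : Prop :=
  0 < lam ∧
  ∃ w w' : ℝ → ℝ, IsLinSol N δ R lam m w w' ∧ (∃ r ∈ Icc δ R, w r ≠ 0) ∧
    ∃ Z : Finset ℝ, Z.card = k - 1 ∧
      (∀ r : ℝ, r ∈ Z ↔ r ∈ Ioo δ R ∧ w r = 0) ∧
      ∀ r ∈ Z, w' r ≠ 0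

/-- The function `h(y) = (1-y²)^{3/2}` for `|y| ≤ 1`, `h(y) = 0` otherwise. -/
noncomputable def hcap (y : ℝ) : ℝ := if |y| ≤ 1 then (1 - y ^ 2) ^ ((3 : ℝ) / 2) else 0

/-- `φ₁⁻¹(y) = y / √(1 + y²)`, the inverse of `φ₁`. -/
noncomputable def phi1inv (y : ℝ) : ℝ := y / Real.sqrt (1 + y ^ 2)

/-- `Σ_δ`: the closure, in `ℝ × C¹([δ,R])` (realized as `ℝ × (C([δ,R]) × C([δ,R]))`
via `u ↦ (u, u')`), of the set of pairs `(λ, u)` with `λ ≥ 0` and `u` a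
nontrivial solution of `(P)_{δ,λ}`. -/
noncomputable def SigmaSet (N : ℕ) (δ R : ℝ) (f : ℝ → ℝ → ℝ) :
    Set (ℝ × (ContinuousMap (Icc δ R) ℝ × ContinuousMap (Icc δ R) ℝ)) :=
  closure {p | 0 ≤ p.1 ∧ ∃ u u' : ℝ → ℝ,
    IsSolP N δ R p.1 f u u' ∧
    (∀ x : Icc δ R, p.2.1 x = u x ∧ p.2.2 x = u' x) ∧
    ∃ r ∈ Icc δ R, u r ≠ 0}

/-- Lemma 2.3. If `f` is continuous, Lipschitz in its second
variable on bounded sets, and `f(r,0) ≡ 0`, then the only solution of the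
equation `(r^{N-1} φ₁(u'))' + λ r^{N-1} f(r,u) = 0` with `u(τ) = u'(τ) = 0` at
some interior point `τ` is `u ≡ 0`. -/
theorem stmt6 (N : ℕ) (hN : 2 ≤ N) (δ R lam : ℝ) (hδ : 0 ≤ δ) (hδR : δ < R) (hlam : 0 ≤ lam)
    (f : ℝ → ℝ → ℝ)
    (hfc : ContinuousOn (fun p : ℝ × ℝ => f p.1 p.2) (Icc δ R ×ˢ (univ : Set ℝ)))
    (hfLip : ∀ K : ℝ, 0 < K → ∃ Lip : ℝ, 0 ≤ Lip ∧
      ∀ r ∈ Icc δ R, ∀ s₁ s₂ : ℝ, |s₁| ≤ K → |s₂| ≤ K →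
        |f r s₁ - f r s₂| ≤ Lip * |s₁ - s₂|)
    (hf0 : ∀ r ∈ Icc δ R, f r 0 = 0)
    (τ : ℝ) (hτ : τ ∈ Ioo δ R)
    (u u' : ℝ → ℝ)
    (hu : ∀ r ∈ Icc δ R, HasDerivWithinAt u (u' r) (Icc δ R) r)
    (hu'c : ContinuousOn u' (Icc δ R))
    (hu'lt : ∀ r ∈ Icc δ R, |u' r| < 1)
    (w' : ℝ → ℝ) (hw'c : ContinuousOn w' (Icc δ R))
    (hw : ∀ r ∈ Icc δ R,
      HasDerivWithinAt (fun t => t ^ (N - 1) * phi1 (u' t)) (w' r) (Icc δ R) r)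
    (heq : ∀ r ∈ Ioo δ R, w' r + lam * r ^ (N - 1) * f r (u r) = 0)
    (huτ : u τ = 0) (hu'τ : u' τ = 0) :
    ∀ r ∈ Icc δ R, u r = 0 := by
  have hδτ : δ < τ := hτ.1
  have hτR : τ < R := hτ.2
  have hτIcc : τ ∈ Icc δ R := ⟨hδτ.le, hτR.le⟩
  have huc : ContinuousOn u (Icc δ R) := fun r hr => (hu r hr).continuousWithinAt
  obtain ⟨x₀, hx₀, hmax⟩ :=
    isCompact_Icc.exists_isMaxOn (⟨τ, hτIcc⟩ : (Icc δ R).Nonempty) huc.abs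
  set M : ℝ := |u x₀| with hMdef
  have hM : ∀ r ∈ Icc δ R, |u r| ≤ M := fun r hr => hmax hr
  have hM0 : 0 ≤ M := abs_nonneg _
  obtain ⟨L, hL0, hL⟩ := hfLip (M + 1) (by linarith)
  -- basic facts about phi1
  have hphi0 : phi1 0 = 0 := by simp [phi1]
  have hphi : ∀ s : ℝ, |s| < 1 → |s| ≤ |phi1 s| := by
    intro s hs
    have h1 : 0 < 1 - s ^ 2 := by nlinarith [abs_nonneg s, sq_abs s]
    have h2 : Real.sqrt (1 - s ^ 2) ≤ 1 := Real.sqrt_le_one.mpr (by nlinarith)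
    have h3 : 0 < Real.sqrt (1 - s ^ 2) := Real.sqrt_pos.mpr h1
    rw [phi1, abs_div, abs_of_pos h3, le_div_iff₀ h3]
    nlinarith [abs_nonneg s]
  set F : ℝ → ℝ × ℝ := fun r => (u r, r ^ (N - 1) * phi1 (u' r)) with hFdef
  set F' : ℝ → ℝ × ℝ := fun r => (u' r, w' r) with hF'def
  have hFd : ∀ r ∈ Icc δ R, HasDerivWithinAt F (F' r) (Icc δ R) r :=
    fun r hr => (hu r hr).prodMk (hw r hr)
  have hFc : ContinuousOn F (Icc δ R) := fun r hr => (hFd r hr).continuousWithinAt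
  have hFτ : F τ = 0 := by
    simp [hFdef, huτ, hu'τ, hphi0, Prod.ext_iff]
  have main : ∀ a, δ < a → a ≤ τ → ∀ r ∈ Icc a R, u r = 0 := by
    intro a haδ haτ
    have ha0 : 0 < a := hδ.trans_lt haδ
    have han : 0 < a ^ (N - 1) := pow_pos ha0 _
    set Kc : ℝ := max (a ^ (N - 1))⁻¹ (lam * R ^ (N - 1) * L) with hKcdef
    have hKc0 : 0 ≤ Kc := le_trans (inv_nonneg.mpr han.le) (le_max_left _ _)
    -- the key differential inequality
    have hb : ∀ r, r ∈ Icc a R → r ∈ Ioo δ R → ‖F' r‖ ≤ Kc * ‖F r‖ := by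
      intro r hr hr'
      have hrIcc : r ∈ Icc δ R := ⟨hr'.1.le, hr'.2.le⟩
      have hr0 : 0 < r := ha0.trans_le hr.1
      have hnF : ‖F r‖ = max |u r| |r ^ (N - 1) * phi1 (u' r)| := by
        simp [hFdef, Prod.norm_def, Real.norm_eq_abs, abs_mul, abs_pow]
      have hnF' : ‖F' r‖ = max |u' r| |w' r| := by
        simp [hF'def, Prod.norm_def, Real.norm_eq_abs]
      have hu'b : |u' r| ≤ Kc * ‖F r‖ := by
        have h1 : a ^ (N - 1) ≤ r ^ (N - 1) := pow_le_pow_left₀ ha0.le hr.1 _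
        have h2 : |u' r| ≤ |phi1 (u' r)| := hphi _ (hu'lt r hrIcc)
        have h3 : a ^ (N - 1) * |u' r| ≤ |r ^ (N - 1) * phi1 (u' r)| := by
          rw [abs_mul, abs_of_pos (pow_pos hr0 _)]
          exact mul_le_mul h1 h2 (abs_nonneg _) (pow_nonneg hr0.le _)
        have h4 : |u' r| ≤ (a ^ (N - 1))⁻¹ * |r ^ (N - 1) * phi1 (u' r)| := by
          rw [le_inv_mul_iff₀ han]
          exact h3
        calc |u' r| ≤ (a ^ (N - 1))⁻¹ * |r ^ (N - 1) * phi1 (u' r)| := h4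
          _ ≤ Kc * ‖F r‖ := by
              apply mul_le_mul (le_max_left _ _) _ (abs_nonneg _) hKc0
              rw [hnF]; exact le_max_right _ _
      have hw'b : |w' r| ≤ Kc * ‖F r‖ := by
        have he := heq r hr'
        have hw'eq : w' r = -(lam * r ^ (N - 1) * f r (u r)) := by linarith
        have hfb : |f r (u r)| ≤ L * |u r| := by
          have := hL r hrIcc (u r) 0 (by have := hM r hrIcc; linarith)
            (by simp; linarith)
          simpa [hf0 r hrIcc] using this
        have hrn : r ^ (N - 1) ≤ R ^ (N - 1) := pow_le_pow_left₀ hr0.le hr'.2.le _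
        have hrn0 : 0 ≤ r ^ (N - 1) := pow_nonneg hr0.le _
        have h5 : |w' r| ≤ lam * R ^ (N - 1) * L * |u r| := by
          rw [hw'eq, abs_neg, abs_mul, abs_mul, abs_of_nonneg hlam,
            abs_of_nonneg hrn0]
          calc lam * r ^ (N - 1) * |f r (u r)|
              ≤ lam * r ^ (N - 1) * (L * |u r|) :=
                mul_le_mul_of_nonneg_left hfb (mul_nonneg hlam hrn0)
            _ ≤ lam * R ^ (N - 1) * (L * |u r|) :=
                mul_le_mul_of_nonneg_right
                  (mul_le_mul_of_nonneg_left hrn hlam)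
                  (mul_nonneg hL0 (abs_nonneg _))
            _ = lam * R ^ (N - 1) * L * |u r| := by ring
        calc |w' r| ≤ lam * R ^ (N - 1) * L * |u r| := h5
          _ ≤ Kc * ‖F r‖ := by
              apply mul_le_mul (le_max_right _ _) _ (abs_nonneg _) hKc0
              rw [hnF]; exact le_max_left _ _
      rw [hnF']
      exact max_le hu'b hw'b
    -- Gronwall to the right of τ
    have hright : ∀ r ∈ Icc τ R, F r = 0 := by
      intro r hr
      have h := norm_le_gronwallBound_of_norm_deriv_right_le
        (f := F) (f' := F') (δ := 0) (K := Kc) (ε := 0) (a := τ) (b := R)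
        (hFc.mono (Icc_subset_Icc hδτ.le le_rfl))
        (fun t ht => (hFd t ⟨hδτ.le.trans ht.1, ht.2.le⟩).mono_of_mem_nhdsWithin
          (mem_nhdsWithin.mpr ⟨Iio R, isOpen_Iio, ht.2, fun x hx =>
            ⟨le_trans (hδτ.le.trans ht.1) hx.2, hx.1.le⟩⟩))
        (by simp [hFτ])
        (fun t ht => by
          have := hb t ⟨haτ.trans ht.1, ht.2.le⟩ ⟨hδτ.trans_le ht.1, ht.2⟩
          simpa using this)
      have h2 := h r hr
      rw [gronwallBound_ε0] at h2
      simp only [zero_mul] at h2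
      exact norm_le_zero_iff.mp h2
    -- Gronwall to the left of τ, via reflection
    have hleft : ∀ r ∈ Icc a τ, F r = 0 := by
      have hmaps : MapsTo (fun s : ℝ => τ - s) (Icc 0 (τ - a)) (Icc δ R) := by
        intro x hx
        simp only [mem_Icc] at hx ⊢
        exact ⟨by linarith [hx.2], by linarith [hx.1, hτR.le]⟩
      have hGd : ∀ s ∈ Icc 0 (τ - a),
          HasDerivWithinAt (fun s : ℝ => F (τ - s)) (-F' (τ - s)) (Icc 0 (τ - a)) s := by
        intro s hs
        have h1 : HasDerivWithinAt (fun x : ℝ => τ - x) (-1) (Icc 0 (τ - a)) s :=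
          ((hasDerivAt_id s).const_sub τ).hasDerivWithinAt
        have h2 := HasDerivWithinAt.scomp (g₁ := F) (h := fun x : ℝ => τ - x)
          (x := s) (hFd (τ - s) (hmaps hs)) h1 hmaps
        rw [neg_one_smul] at h2
        exact h2
      have hGc : ContinuousOn (fun s : ℝ => F (τ - s)) (Icc 0 (τ - a)) :=
        hFc.comp ((continuous_const.sub continuous_id).continuousOn) hmaps
      intro r hr
      have h := norm_le_gronwallBound_of_norm_deriv_right_le
        (f := fun s : ℝ => F (τ - s)) (f' := fun s : ℝ => -F' (τ - s))
        (δ := 0) (K := Kc) (ε := 0) (a := 0) (b := τ - a)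
        hGc
        (fun t ht => (hGd t ⟨ht.1, ht.2.le⟩).mono_of_mem_nhdsWithin
          (mem_nhdsWithin.mpr ⟨Iio (τ - a), isOpen_Iio, ht.2, fun x hx =>
            ⟨le_trans ht.1 hx.2, hx.1.le⟩⟩))
        (by simp [hFτ])
        (fun t ht => by
          have ht1 : τ - t ∈ Icc a R := by
            constructor <;> [linarith [ht.2]; linarith [ht.1, hτR.le]]
          have ht2 : τ - t ∈ Ioo δ R := by
            constructor <;> [linarith [ht.2]; linarith [ht.1]]
          have := hb (τ - t) ht1 ht2
          simpa using this)
      have h2 := h (τ - r) ⟨by linarith [hr.2], by linarith [hr.1]⟩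
      rw [gronwallBound_ε0] at h2
      simp only [zero_mul] at h2
      have h3 : F (τ - (τ - r)) = 0 := norm_le_zero_iff.mp h2
      simpa using h3
    intro r hr
    rcases le_total r τ with h | h
    · have := hleft r ⟨hr.1, h⟩
      exact congrArg Prod.fst this
    · have := hright r ⟨h, hr.2⟩
      exact congrArg Prod.fst this
  intro r hr
  rcases eq_or_lt_of_le hr.1 with h | h
  · -- r = δ : use continuity
    have hall : ∀ x ∈ Ioc δ R, u x = 0 := fun x hx =>
      main (min x τ) (lt_min hx.1 hδτ) (min_le_right _ _) x ⟨min_le_left _ _, hx.2⟩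
    have h1 : Filter.Tendsto u (𝓝[Ioc δ R] δ) (𝓝 (u δ)) :=
      (huc δ (left_mem_Icc.mpr hδR.le)).mono Ioc_subset_Icc_self
    have h2 : Filter.Tendsto u (𝓝[Ioc δ R] δ) (𝓝 0) :=
      tendsto_const_nhds.congr'
        (eventually_mem_nhdsWithin.mono fun x hx => (hall x hx).symm)
    have hne : (𝓝[Ioc δ R] δ).NeBot := by
      rw [nhdsWithin_Ioc_eq_nhdsGT hδR]; infer_instance
    rw [← h]
    exact tendsto_nhds_unique h1 h2
  · exact main (min r τ) (lt_min h hδτ) (min_le_right _ _) r ⟨min_le_left _ _, hr.2⟩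
end

section
/- Let N ≥ 2 be an integer, 0 ≤ δ < R, λ ≥ 0, and let f satisfy (A1) and (A4). Then for every ε ∈ (0, 0.9] there exists d_ε ∈ (0, ε] such that: whenever u is a solution, on a subinterval [δ, β] ⊆ [δ, R], of the initial value problem (r^{N−1}φ₁(u'))' + λ r^{N−1} f(r,u) = 0, u(δ) = d, u'(δ) = 0 with |d| ≤ d_ε, then sup_{r∈[δ,β]} |u(r)| + sup_{r∈[δ,β]} |u'(r)| ≤ ε (in particular u stays in the region where the equation is defined, so it extends to all of [δ,R]). -/
open Set Filter Topology

lemma phi1_zero : phi1 0 = 0 := by simp [phi1]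

lemma mul_phi1_nonneg (s : ℝ) : 0 ≤ s * phi1 s := by
  have : s * phi1 s = s ^ 2 / Real.sqrt (1 - s ^ 2) := by
    rw [phi1]; ring
  rw [this]
  positivity

lemma one_sub_sq_pos {s : ℝ} (hs : |s| < 1) : 0 < 1 - s ^ 2 := by
  have := abs_lt.1 hs
  nlinarith [this.1, this.2]

lemma phi1_sq {s : ℝ} (hs : |s| < 1) : 1 + phi1 s ^ 2 = 1 / (1 - s ^ 2) := by
  have h := one_sub_sq_pos hs
  have hsq : Real.sqrt (1 - s ^ 2) ^ 2 = 1 - s ^ 2 := Real.sq_sqrt h.le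
  have hne : Real.sqrt (1 - s ^ 2) ≠ 0 := by positivity
  rw [phi1, div_pow, hsq]
  field_simp
  ring

lemma phi1_div_sqrt {s : ℝ} (hs : |s| < 1) : phi1 s / Real.sqrt (1 + phi1 s ^ 2) = s := by
  have h := one_sub_sq_pos hs
  have hne : Real.sqrt (1 - s ^ 2) ≠ 0 := by positivity
  rw [phi1_sq hs, one_div, Real.sqrt_inv, div_inv_eq_mul, phi1]
  exact div_mul_cancel₀ s hne

lemma abs_le_of_energy {s M : ℝ} (hs : |s| < 1) (hM : 0 ≤ M) (hM1 : M ≤ 1)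
    (h : Real.sqrt (1 + phi1 s ^ 2) - 1 ≤ M ^ 2 / 2) : |s| ≤ M := by
  have h1 := one_sub_sq_pos hs
  have h2 : (1 : ℝ) + phi1 s ^ 2 = 1 / (1 - s ^ 2) := phi1_sq hs
  have h3 : Real.sqrt (1 + phi1 s ^ 2) ≤ 1 + M ^ 2 / 2 := by linarith
  have h4 : 1 + phi1 s ^ 2 ≤ (1 + M ^ 2 / 2) ^ 2 := by
    have := Real.sq_sqrt (by positivity : (0:ℝ) ≤ 1 + phi1 s ^ 2)
    nlinarith [Real.sqrt_nonneg (1 + phi1 s ^ 2)]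
  rw [h2] at h4
  have h5 : 1 ≤ (1 + M ^ 2 / 2) ^ 2 * (1 - s ^ 2) := by
    rw [div_le_iff₀ h1] at h4; linarith
  have h6 : s ^ 2 ≤ M ^ 2 := by nlinarith [h5, sq_nonneg M, sq_nonneg (M ^ 2), sq_nonneg s, sq_nonneg (M * M), mul_nonneg (mul_nonneg hM hM) (mul_nonneg hM hM), mul_nonneg (sq_nonneg M) (sq_nonneg s)]
  calc |s| = Real.sqrt (s ^ 2) := (Real.sqrt_sq_eq_abs s).symm
  _ ≤ Real.sqrt (M ^ 2) := Real.sqrt_le_sqrt h6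
  _ = M := by rw [Real.sqrt_sq hM]

lemma continuousAt_phi1 {y : ℝ} (hy : |y| < 1) : ContinuousAt phi1 y := by
  have h := one_sub_sq_pos hy
  have : ContinuousAt (fun s : ℝ => Real.sqrt (1 - s ^ 2)) y :=
    (Real.continuous_sqrt.comp (by continuity)).continuousAt
  exact continuousAt_id.div this (by positivity)

lemma hasDerivAt_comp_integral
    (f : ℝ → ℝ → ℝ) (u : ℝ → ℝ) (u'0 Fr0 : ℝ) (t₀ : ℝ) (a'' : ℝ)
    (V : Set ℝ) (hV : V ∈ 𝓝 t₀)
    (hslice : ∀ t ∈ V, ContinuousOn (f t) (Icc (-a'') a''))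
    (hfc : ContinuousAt (fun p : ℝ × ℝ => f p.1 p.2) (t₀, u t₀))
    (hu : HasDerivAt u u'0 t₀)
    (hu0 : |u t₀| < a'')
    (hFr : HasDerivAt (fun t => ∫ x in (0:ℝ)..(u t₀), f t x) Fr0 t₀) :
    HasDerivAt (fun t => ∫ x in (0:ℝ)..(u t), f t x) (Fr0 + f t₀ (u t₀) * u'0) t₀ := by
  set s₀ := u t₀ with hs₀
  set c := f t₀ s₀ with hc
  have ha'' : 0 < a'' := lt_of_le_of_lt (abs_nonneg _) hu0
  have hs₀mem : s₀ ∈ Icc (-a'') a'' := by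
    have := abs_lt.1 hu0; exact ⟨this.1.le, this.2.le⟩
  have h0mem : (0:ℝ) ∈ Icc (-a'') a'' := by constructor <;> linarith
  set A : ℝ → ℝ := fun t => ∫ x in s₀..(u t), f t x with hA
  set g : ℝ → ℝ := fun t => ∫ x in (0:ℝ)..s₀, f t x with hg
  have hVev : ∀ᶠ t in 𝓝 t₀, t ∈ V := hV
  have huev : ∀ᶠ t in 𝓝 t₀, |u t| < a'' := by
    have hset : {y : ℝ | |y| < a''} ∈ 𝓝 s₀ :=
      (isOpen_lt (by continuity) continuous_const).mem_nhds hu0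
    exact hu.continuousAt hset
  have hsplit : (fun t => ∫ x in (0:ℝ)..(u t), f t x) =ᶠ[𝓝 t₀] fun t => g t + A t := by
    filter_upwards [hVev, huev] with t ht1 ht2
    have hutmem : u t ∈ Icc (-a'') a'' := by
      have := abs_lt.1 ht2; exact ⟨this.1.le, this.2.le⟩
    have int1 : IntervalIntegrable (f t) MeasureTheory.volume 0 s₀ :=
      ((hslice t ht1).mono (uIcc_subset_Icc h0mem hs₀mem)).intervalIntegrable
    have int2 : IntervalIntegrable (f t) MeasureTheory.volume s₀ (u t) :=
      ((hslice t ht1).mono (uIcc_subset_Icc hs₀mem hutmem)).intervalIntegrable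
    exact (intervalIntegral.integral_add_adjacent_intervals int1 int2).symm
  suffices hAderiv : HasDerivAt A (c * u'0) t₀ by
    exact (hFr.add hAderiv).congr_of_eventuallyEq hsplit
  rw [hasDerivAt_iff_tendsto_slope]
  have hA0 : A t₀ = 0 := by simp [hA, ← hs₀, intervalIntegral.integral_same]
  have hslopeu := hasDerivAt_iff_tendsto_slope.1 hu
  have hterm2 : Tendsto (fun t => (A t - c * (u t - s₀)) / (t - t₀)) (𝓝[≠] t₀) (𝓝 0) := by
    rw [NormedAddCommGroup.tendsto_nhds_zero]
    intro ε hε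
    have hd : (0:ℝ) < 2 * (|u'0| + 1) := by positivity
    set e' := ε / (2 * (|u'0| + 1)) with he'
    have he'pos : 0 < e' := by positivity
    have hWmem : {p : ℝ × ℝ | |f p.1 p.2 - c| < e'} ∩ (V ×ˢ univ) ∈ 𝓝 (t₀, s₀) := by
      refine inter_mem ?_ (prod_mem_nhds hV univ_mem)
      have : Metric.ball c e' ∈ 𝓝 c := Metric.ball_mem_nhds c he'pos
      have := hfc this
      refine mem_of_superset this ?_
      intro p hp
      simpa [Metric.mem_ball, Real.dist_eq] using hp
    obtain ⟨r, hr, hball⟩ := Metric.mem_nhds_iff.1 hWmem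
    set r' := min r (a'' - |s₀|) with hr'
    have hr'pos : 0 < r' := lt_min hr (by linarith [hu0])
    have ev1 : ∀ᶠ t in 𝓝 t₀, dist t t₀ < r' := Metric.eventually_nhds_iff.2 ⟨r', hr'pos, fun {y} hy => hy⟩
    have ev2 : ∀ᶠ t in 𝓝 t₀, |u t - s₀| < r' := by
      have hset : {y : ℝ | |y - s₀| < r'} ∈ 𝓝 s₀ := by
        have : Metric.ball s₀ r' ∈ 𝓝 s₀ := Metric.ball_mem_nhds s₀ hr'pos
        refine mem_of_superset this ?_
        intro y hy; simpa [Metric.mem_ball, Real.dist_eq] using hy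
      exact hu.continuousAt hset
    have ev3 : ∀ᶠ t in 𝓝[≠] t₀, |slope u t₀ t| < |u'0| + 1 := by
      have : ∀ᶠ y in 𝓝 u'0, |y| < |u'0| + 1 := by
        have hset : {y : ℝ | |y| < |u'0| + 1} ∈ 𝓝 u'0 :=
          (isOpen_lt (by continuity) continuous_const).mem_nhds (by simp only [mem_setOf_eq]; linarith)
        exact hset
      exact hslopeu.eventually this
    filter_upwards [ev1.filter_mono nhdsWithin_le_nhds, ev2.filter_mono nhdsWithin_le_nhds,
      hVev.filter_mono nhdsWithin_le_nhds, ev3, self_mem_nhdsWithin] with t h1 h2 h3 h4 h5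
    have htne : t - t₀ ≠ 0 := sub_ne_zero.2 h5
    have hutmem : u t ∈ Icc (-a'') a'' := by
      have h6 : |u t| < a'' := by
        have := abs_sub_abs_le_abs_sub (u t) s₀
        have : |u t| ≤ |s₀| + |u t - s₀| := by
          calc |u t| = |s₀ + (u t - s₀)| := by ring_nf
          _ ≤ |s₀| + |u t - s₀| := abs_add_le _ _
        have hr'le : r' ≤ a'' - |s₀| := min_le_right _ _
        linarith
      have := abs_lt.1 h6; exact ⟨this.1.le, this.2.le⟩
    have hint : IntervalIntegrable (f t) MeasureTheory.volume s₀ (u t) :=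
      ((hslice t h3).mono (uIcc_subset_Icc hs₀mem hutmem)).intervalIntegrable
    have hptbound : ∀ x ∈ Set.uIoc s₀ (u t), ‖f t x - c‖ ≤ e' := by
      intro x hx
      have hxmem : x ∈ uIcc s₀ (u t) := uIoc_subset_uIcc hx
      have hxs : |x - s₀| ≤ |u t - s₀| := by
        rcases Set.mem_uIcc.1 hxmem with ⟨hl, hh⟩ | ⟨hl, hh⟩
        · exact abs_le.2 ⟨by linarith [abs_nonneg (u t - s₀)], by linarith [le_abs_self (u t - s₀)]⟩
        · exact abs_le.2 ⟨by linarith [neg_abs_le (u t - s₀)], by linarith [abs_nonneg (u t - s₀)]⟩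
      have hpt : (t, x) ∈ Metric.ball (t₀, s₀) r := by
        rw [Metric.mem_ball, Prod.dist_eq]
        refine max_lt ?_ ?_
        · exact lt_of_lt_of_le h1 (min_le_left _ _)
        · rw [Real.dist_eq]; exact lt_of_le_of_lt hxs (lt_of_lt_of_le h2 (min_le_left _ _))
      have := (hball hpt).1
      rw [Real.norm_eq_abs]; exact this.le
    have hAc : A t - c * (u t - s₀) = ∫ x in s₀..(u t), (f t x - c) := by
      rw [intervalIntegral.integral_sub hint intervalIntegrable_const,
        intervalIntegral.integral_const]
      simp only [smul_eq_mul]; ring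
    have hbnd : ‖A t - c * (u t - s₀)‖ ≤ e' * |u t - s₀| := by
      rw [hAc]
      exact intervalIntegral.norm_integral_le_of_norm_le_const hptbound
    rw [Real.norm_eq_abs, abs_div]
    have hslope_eq : |u t - s₀| / |t - t₀| = |slope u t₀ t| := by
      rw [slope_def_field, abs_div, hs₀]
    calc |A t - c * (u t - s₀)| / |t - t₀| ≤ e' * |u t - s₀| / |t - t₀| := by
          rw [Real.norm_eq_abs] at hbnd
          gcongr
    _ = e' * |slope u t₀ t| := by rw [mul_div_assoc, hslope_eq]
    _ ≤ e' * (|u'0| + 1) := by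
          apply mul_le_mul_of_nonneg_left h4.le he'pos.le
    _ = ε * (|u'0| + 1) / (2 * (|u'0| + 1)) := by rw [he']; ring
    _ < ε := by
          rw [div_lt_iff₀ hd]
          nlinarith [abs_nonneg u'0]
  have heq : ∀ᶠ t in 𝓝[≠] t₀, c * slope u t₀ t + (A t - c * (u t - s₀)) / (t - t₀) = slope A t₀ t := by
    filter_upwards [self_mem_nhdsWithin] with t ht
    have htne : t - t₀ ≠ 0 := sub_ne_zero.2 ht
    rw [slope_def_field, slope_def_field, hA0, ← hs₀]
    field_simp
    ring
  have htot := (hslopeu.const_mul c).add hterm2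
  rw [add_zero] at htot
  refine Tendsto.congr' heq ?_
  rw [mul_comm]
  convert htot using 2
  ring

lemma contOn_integral_joint
    (f : ℝ → ℝ → ℝ) (T : Set ℝ) (a'' B : ℝ) (ha'' : 0 < a'')
    (hslice : ∀ t ∈ T, ContinuousOn (f t) (Icc (-a'') a''))
    (hB : ∀ t ∈ T, ∀ x ∈ Icc (-a'') a'', |f t x| ≤ B)
    (htc : ∀ s ∈ Icc (-a'') a'', ContinuousOn (fun t => ∫ x in (0:ℝ)..s, f t x) T) :
    ContinuousOn (fun p : ℝ × ℝ => ∫ x in (0:ℝ)..p.2, f p.1 x) (T ×ˢ Icc (-a'') a'') := by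
  intro p₀ hp₀
  obtain ⟨ht₀, hs₀⟩ := hp₀
  have h0mem : (0:ℝ) ∈ Icc (-a'') a'' := ⟨by linarith, ha''.le⟩
  have key : ∀ p ∈ T ×ˢ Icc (-a'') a'',
      (∫ x in (0:ℝ)..p.2, f p.1 x)
        = (∫ x in (0:ℝ)..p₀.2, f p.1 x) + ∫ x in p₀.2..p.2, f p.1 x := by
    intro p hp
    have int1 : IntervalIntegrable (f p.1) MeasureTheory.volume 0 p₀.2 :=
      ((hslice p.1 hp.1).mono (uIcc_subset_Icc h0mem hs₀)).intervalIntegrable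
    have int2 : IntervalIntegrable (f p.1) MeasureTheory.volume p₀.2 p.2 :=
      ((hslice p.1 hp.1).mono (uIcc_subset_Icc hs₀ hp.2)).intervalIntegrable
    exact (intervalIntegral.integral_add_adjacent_intervals int1 int2).symm
  have t1 : ContinuousWithinAt (fun p : ℝ × ℝ => ∫ x in (0:ℝ)..p₀.2, f p.1 x)
      (T ×ˢ Icc (-a'') a'') p₀ := by
    have := (htc p₀.2 hs₀) p₀.1 ht₀
    exact this.comp continuousWithinAt_fst (fun p hp => hp.1)
  have t2 : Tendsto (fun p : ℝ × ℝ => ∫ x in p₀.2..p.2, f p.1 x)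
      (𝓝[T ×ˢ Icc (-a'') a''] p₀) (𝓝 0) := by
    apply squeeze_zero_norm' (a := fun p : ℝ × ℝ => |B| * |p.2 - p₀.2|)
    · filter_upwards [eventually_mem_nhdsWithin] with p hp
      have hbd : ∀ x ∈ Set.uIoc p₀.2 p.2, ‖f p.1 x‖ ≤ |B| := by
        intro x hx
        have hxm : x ∈ Icc (-a'') a'' := uIcc_subset_Icc hs₀ hp.2 (uIoc_subset_uIcc hx)
        exact le_trans (hB p.1 hp.1 x hxm) (le_abs_self B)
      exact intervalIntegral.norm_integral_le_of_norm_le_const hbd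
    · have hcont : Continuous (fun p : ℝ × ℝ => |B| * |p.2 - p₀.2|) := by continuity
      have h2 := (hcont.tendsto p₀).mono_left
        (nhdsWithin_le_nhds (s := T ×ˢ Icc (-a'') a''))
      simpa using h2
  have := (t1.tendsto.add t2)
  rw [add_zero] at this
  refine Tendsto.congr' ?_ this
  filter_upwards [eventually_mem_nhdsWithin] with p hp
  exact (key p hp).symm

lemma integral_slice_nonneg
    (f : ℝ → ℝ → ℝ) (R a'' : ℝ) (α : EReal) (ha : (a'' : EReal) < α) (ha0 : 0 < a'')
    (hsign : ∀ r ∈ Icc 0 R, ∀ s : ℝ, ((|s| : ℝ) : EReal) < α → s ≠ 0 → 0 < f r s * s)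
    (hslice : ∀ t ∈ Icc 0 R, ContinuousOn (f t) (Icc (-a'') a''))
    (t : ℝ) (ht : t ∈ Icc 0 R) (s : ℝ) (hs : |s| ≤ a'') :
    0 ≤ ∫ x in (0:ℝ)..s, f t x := by
  have hcoe : ∀ x : ℝ, |x| ≤ a'' → ((|x| : ℝ) : EReal) < α := by
    intro x hx
    exact lt_of_le_of_lt (by exact_mod_cast hx) ha
  have hpos : ∀ x : ℝ, 0 < x → x ≤ a'' → 0 < f t x := by
    intro x hx hxa
    have := hsign t ht x (hcoe x (by rw [abs_of_pos hx]; exact hxa)) (ne_of_gt hx)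
    nlinarith
  have hneg : ∀ x : ℝ, x < 0 → -a'' ≤ x → f t x < 0 := by
    intro x hx hxa
    have := hsign t ht x (hcoe x (by rw [abs_of_neg hx]; linarith)) (ne_of_lt hx)
    nlinarith
  have h0mem : (0:ℝ) ∈ Icc (-a'') a'' := ⟨by linarith, ha0.le⟩
  have hcw : ContinuousWithinAt (f t) (Icc (-a'') a'') 0 := (hslice t ht) 0 h0mem
  have hf0r : 0 ≤ f t 0 := by
    have hmono : 𝓝[Ioc 0 a''] (0:ℝ) ≤ 𝓝[Icc (-a'') a''] 0 :=
      nhdsWithin_mono _ (fun x hx => ⟨by linarith [hx.1], hx.2⟩)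
    have htend : Tendsto (f t) (𝓝[Ioc 0 a''] 0) (𝓝 (f t 0)) := hcw.tendsto.mono_left hmono
    have hne : (𝓝[Ioc 0 a''] (0:ℝ)).NeBot := by
      rw [nhdsWithin_Ioc_eq_nhdsGT ha0]
      infer_instance
    refine ge_of_tendsto htend ?_
    filter_upwards [eventually_mem_nhdsWithin] with x hx
    exact (hpos x hx.1 hx.2).le
  have hf0l : f t 0 ≤ 0 := by
    have hmono : 𝓝[Ico (-a'') 0] (0:ℝ) ≤ 𝓝[Icc (-a'') a''] 0 :=
      nhdsWithin_mono _ (fun x hx => ⟨hx.1, by linarith [hx.2]⟩)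
    have htend : Tendsto (f t) (𝓝[Ico (-a'') 0] 0) (𝓝 (f t 0)) := hcw.tendsto.mono_left hmono
    have hne : (𝓝[Ico (-a'') 0] (0:ℝ)).NeBot := by
      rw [nhdsWithin_Ico_eq_nhdsLT (by linarith : -a'' < (0:ℝ))]
      infer_instance
    refine le_of_tendsto htend ?_
    filter_upwards [eventually_mem_nhdsWithin] with x hx
    exact (hneg x hx.2 hx.1).le
  rcases le_or_gt 0 s with hs0 | hs0
  · refine intervalIntegral.integral_nonneg hs0 ?_
    intro x hx
    rcases eq_or_lt_of_le hx.1 with h | h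
    · rw [← h]; exact hf0r
    · exact (hpos x h (by rw [abs_of_nonneg hs0] at hs; linarith [hx.2])).le
  · rw [intervalIntegral.integral_symm]
    rw [neg_nonneg]
    have : 0 ≤ ∫ x in s..(0:ℝ), -f t x := by
      refine intervalIntegral.integral_nonneg hs0.le ?_
      intro x hx
      rcases eq_or_lt_of_le hx.2 with h | h
      · rw [h]; simp [hf0l]
      · have : f t x < 0 := hneg x h (by rw [abs_of_neg hs0] at hs; linarith [hx.1])
        linarith
    rwa [intervalIntegral.integral_neg, le_neg, neg_zero] at this
set_option maxHeartbeats 1000000 in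
lemma core_est
    (δ R lam a'' B C M : ℝ) (α : EReal) (f Fr : ℝ → ℝ → ℝ) (ω : ℝ → ℝ)
    (n : ℕ) (hn1 : 1 ≤ n)
    (hδ : 0 ≤ δ) (hδR : δ < R) (hlam : 0 ≤ lam)
    (ha''α : ((a'' : ℝ) : EReal) < α) (ha''0 : 0 < a'')
    (hsign : ∀ r ∈ Icc 0 R, ∀ s : ℝ, ((|s| : ℝ) : EReal) < α → s ≠ 0 → 0 < f r s * s)
    (hfcont : ContinuousOn (fun p : ℝ × ℝ => f p.1 p.2)
      {p : ℝ × ℝ | p.1 ∈ Icc 0 R ∧ ((|p.2| : ℝ) : EReal) < α})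
    (hslice : ∀ t ∈ Icc (0:ℝ) R, ContinuousOn (f t) (Icc (-a'') a''))
    (hB : ∀ t ∈ Icc (0:ℝ) R, ∀ x ∈ Icc (-a'') a'', |f t x| ≤ B) (hB0 : 0 ≤ B)
    (hA4' : ∀ s : ℝ, ((|s| : ℝ) : EReal) < α →
      (∀ r ∈ Icc δ R, HasDerivWithinAt (fun t => ∫ x in (0:ℝ)..s, f t x) (Fr r s) (Icc δ R) r) ∧
      (∀ r ∈ Icc δ R, |Fr r s| ≤ ω r * ∫ x in (0:ℝ)..s, f r x))
    (hC : ∀ r ∈ Icc δ R, ω r ≤ C) (hC0 : 0 ≤ C)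
    (hM0 : 0 < M) (hM1 : M ≤ 1)
    (β ρ : ℝ) (hδβ : δ < β) (hβR : β ≤ R) (hδρ : δ < ρ) (hρβ : ρ ≤ β)
    (u u' w' : ℝ → ℝ)
    (hu : ∀ r ∈ Icc δ β, HasDerivWithinAt u (u' r) (Icc δ β) r)
    (hu'c : ContinuousOn u' (Icc δ β))
    (hu'lt : ∀ r ∈ Icc δ β, |u' r| < 1)
    (hw : ∀ r ∈ Icc δ β, HasDerivWithinAt (fun t => t ^ n * phi1 (u' t)) (w' r) (Icc δ β) r)
    (hODE : ∀ r ∈ Ioo δ β, w' r + lam * r ^ n * f r (u r) = 0)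
    (hu'δ : u' δ = 0)
    (hbound : ∀ t ∈ Icc δ ρ, |u t| ≤ a'' / 2)
    (hδM : |u δ| ≤ M)
    (hdη : lam * (B * |u δ|) * Real.exp (C * (R - δ)) ≤ M ^ 2 / 2) :
    ∀ t ∈ Icc δ ρ, |u t| ≤ M * (1 + (R - δ)) ∧ |u' t| ≤ M := by
  set θ := a'' / 2 with hθdef
  have hθ0 : 0 < θ := by positivity
  have hθa'' : θ ≤ a'' := by rw [hθdef]; linarith
  set E := Real.exp (C * (R - δ)) with hEdef
  have hE0 : 0 < E := Real.exp_pos _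
  have hcoele : ∀ x : ℝ, |x| ≤ a'' → ((|x| : ℝ) : EReal) < α := fun x hx =>
    lt_of_le_of_lt (by exact_mod_cast hx) ha''α
  have hucont : ContinuousOn u (Icc δ β) := fun r hr => (hu r hr).continuousWithinAt
  set FF : ℝ → ℝ := fun t => ∫ x in (0:ℝ)..u t, f t x with hFFdef
  set v : ℝ → ℝ := fun t => phi1 (u' t) with hvdef
  set P : ℝ → ℝ := fun t => Real.sqrt (1 + v t ^ 2) - 1 with hPdef
  set H : ℝ → ℝ := fun t => P t + lam * FF t with hHdef
  have hPnn : ∀ t, 0 ≤ P t := by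
    intro t
    have h1 : (1:ℝ) ≤ Real.sqrt (1 + v t ^ 2) := by
      calc (1:ℝ) = Real.sqrt 1 := Real.sqrt_one.symm
      _ ≤ Real.sqrt (1 + v t ^ 2) := Real.sqrt_le_sqrt (by nlinarith [sq_nonneg (v t)])
    simp only [hPdef]; linarith
  have hρR : ρ ≤ R := le_trans hρβ hβR
  have hsubρβ : Icc δ ρ ⊆ Icc δ β := Icc_subset_Icc le_rfl hρβ
  have hsubρR : Icc δ ρ ⊆ Icc δ R := Icc_subset_Icc le_rfl hρR
  have hsubρ0R : Icc δ ρ ⊆ Icc 0 R := Icc_subset_Icc hδ hρR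
  have humem : ∀ t ∈ Icc δ ρ, u t ∈ Icc (-a'') a'' := by
    intro t ht
    have h := abs_le.1 (le_trans (hbound t ht) hθa'')
    exact ⟨h.1, h.2⟩
  have hFFnn : ∀ t ∈ Icc δ ρ, 0 ≤ FF t := by
    intro t ht
    exact integral_slice_nonneg f R a'' α ha''α ha''0 hsign hslice t (hsubρ0R ht) (u t)
      (le_trans (hbound t ht) hθa'')
  have hHnn : ∀ t ∈ Icc δ ρ, 0 ≤ H t := fun t ht => by
    have h1 := hFFnn t ht; have h2 := hPnn t
    simp only [hHdef]; nlinarith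
  have hvcont : ContinuousOn v (Icc δ ρ) := by
    intro t ht
    exact (continuousAt_phi1 (hu'lt t (hsubρβ ht))).comp_continuousWithinAt
      ((hu'c.mono hsubρβ) t ht)
  have hPcont : ContinuousOn P (Icc δ ρ) := by
    apply ContinuousOn.sub ?_ continuousOn_const
    exact (continuousOn_const.add (hvcont.pow 2)).sqrt
  have hFFcont : ContinuousOn FF (Icc δ ρ) := by
    have hjoint := contOn_integral_joint f (Icc δ R) a'' B ha''0
      (fun t ht => hslice t ⟨le_trans hδ ht.1, ht.2⟩)
      (fun t ht => hB t ⟨le_trans hδ ht.1, ht.2⟩)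
      (fun s hs r hr => (((hA4' s (hcoele s (abs_le.2 ⟨hs.1, hs.2⟩))).1) r hr).continuousWithinAt)
    have hpair : ContinuousOn (fun t : ℝ => (t, u t)) (Icc δ ρ) :=
      continuousOn_id.prodMk (hucont.mono hsubρβ)
    have h2 := hjoint.comp hpair (fun t ht => ⟨hsubρR ht, humem t ht⟩)
    exact h2.congr (fun t ht => rfl)
  have hHcont : ContinuousOn H (Icc δ ρ) := hPcont.add (continuousOn_const.mul hFFcont)
  have hkey : ∀ t₀ ∈ Ioo δ ρ, ∃ y, HasDerivAt H y t₀ ∧ y ≤ C * H t₀ := by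
    intro t₀ ht₀
    have ht₀mem : t₀ ∈ Icc δ ρ := ⟨ht₀.1.le, ht₀.2.le⟩
    have ht₀β : t₀ < β := lt_of_lt_of_le ht₀.2 hρβ
    have ht₀R : t₀ < R := lt_of_lt_of_le ht₀.2 hρR
    have ht₀0 : 0 < t₀ := lt_of_le_of_lt hδ ht₀.1
    have hnhds : Icc δ β ∈ 𝓝 t₀ := Icc_mem_nhds ht₀.1 ht₀β
    have hu_at : HasDerivAt u (u' t₀) t₀ := (hu t₀ ⟨ht₀.1.le, ht₀β.le⟩).hasDerivAt hnhds
    have hw_at : HasDerivAt (fun t => t ^ n * phi1 (u' t)) (w' t₀) t₀ :=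
      (hw t₀ ⟨ht₀.1.le, ht₀β.le⟩).hasDerivAt hnhds
    have hT : (t₀ : ℝ) ^ n ≠ 0 := pow_ne_zero _ ht₀0.ne'
    set vd0 := (w' t₀ * t₀ ^ n - t₀ ^ n * phi1 (u' t₀) * ((n : ℝ) * t₀ ^ (n - 1))) / (t₀ ^ n) ^ 2
      with hvd0def
    have hv_at : HasDerivAt v vd0 t₀ := by
      have h1 := hw_at.div (hasDerivAt_pow n t₀) hT
      apply HasDerivAt.congr_of_eventuallyEq h1
      have hopen : Ioi (0:ℝ) ∈ 𝓝 t₀ := isOpen_Ioi.mem_nhds ht₀0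
      filter_upwards [hopen] with t ht
      simp only [hvdef, Pi.div_apply]
      rw [mul_comm, mul_div_assoc, div_self (pow_ne_zero n (ne_of_gt ht)), mul_one]
    have hsqpos : 0 < Real.sqrt (1 + v t₀ ^ 2) := by positivity
    have hP_at : HasDerivAt P ((2 : ℕ) * v t₀ ^ 1 * vd0 / (2 * Real.sqrt (1 + v t₀ ^ 2))) t₀ := by
      have h2 : HasDerivAt (fun t => 1 + v t ^ 2) ((2 : ℕ) * v t₀ ^ 1 * vd0) t₀ :=
        (hv_at.pow 2).const_add 1
      have h3 := h2.sqrt (by positivity)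
      simpa [hPdef] using h3.sub_const 1
    have hfc_at : ContinuousAt (fun p : ℝ × ℝ => f p.1 p.2) (t₀, u t₀) := by
      apply hfcont.continuousAt
      have hopen : IsOpen (Ioo (0:ℝ) R ×ˢ {x : ℝ | ((|x| : ℝ) : EReal) < α}) :=
        isOpen_Ioo.prod (isOpen_lt (continuous_coe_real_ereal.comp continuous_abs)
          continuous_const)
      refine mem_of_superset (hopen.mem_nhds ⟨⟨ht₀0, ht₀R⟩, ?_⟩) ?_
      · exact hcoele (u t₀) (le_trans (hbound t₀ ht₀mem) hθa'')
      · intro p hp; exact ⟨⟨hp.1.1.le, hp.1.2.le⟩, hp.2⟩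
    have hFr_at : HasDerivAt (fun t => ∫ x in (0:ℝ)..(u t₀), f t x) (Fr t₀ (u t₀)) t₀ :=
      (((hA4' (u t₀) (hcoele (u t₀) (le_trans (hbound t₀ ht₀mem) hθa''))).1 t₀
        ⟨ht₀.1.le, ht₀R.le⟩)).hasDerivAt (Icc_mem_nhds ht₀.1 ht₀R)
    have hFF_at : HasDerivAt FF (Fr t₀ (u t₀) + f t₀ (u t₀) * u' t₀) t₀ := by
      refine hasDerivAt_comp_integral f u (u' t₀) (Fr t₀ (u t₀)) t₀ a'' (Icc 0 R)
        (Icc_mem_nhds ht₀0 ht₀R) hslice hfc_at hu_at ?_ hFr_at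
      exact lt_of_le_of_lt (hbound t₀ ht₀mem) (by rw [hθdef]; linarith)
    have hH_at : HasDerivAt H ((2 : ℕ) * v t₀ ^ 1 * vd0 / (2 * Real.sqrt (1 + v t₀ ^ 2))
        + lam * (Fr t₀ (u t₀) + f t₀ (u t₀) * u' t₀)) t₀ := hP_at.add (hFF_at.const_mul lam)
    refine ⟨_, hH_at, ?_⟩
    have hw'0 : w' t₀ = -(lam * t₀ ^ n * f t₀ (u t₀)) := by
      have := hODE t₀ ⟨ht₀.1, ht₀β⟩; linarith
    have hs1 : |u' t₀| < 1 := hu'lt t₀ ⟨ht₀.1.le, ht₀β.le⟩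
    have hsqne : Real.sqrt (1 + v t₀ ^ 2) ≠ 0 := hsqpos.ne'
    have hPd : (2 : ℕ) * v t₀ ^ 1 * vd0 / (2 * Real.sqrt (1 + v t₀ ^ 2)) = u' t₀ * vd0 := by
      have hdiv := phi1_div_sqrt hs1
      push_cast
      rw [pow_one]
      calc 2 * v t₀ * vd0 / (2 * Real.sqrt (1 + v t₀ ^ 2))
          = (v t₀ / Real.sqrt (1 + v t₀ ^ 2)) * vd0 := by field_simp
      _ = u' t₀ * vd0 := by
          simp only [hvdef] at hdiv ⊢ <;> rw [hdiv]
    have hpow : t₀ ^ n = t₀ ^ (n - 1) * t₀ := by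
      rw [← pow_succ]; congr 1; omega
    have hvd : vd0 = -(lam * f t₀ (u t₀)) - (n : ℝ) * v t₀ / t₀ := by
      rw [hvd0def, hw'0]
      simp only [hvdef]
      rw [hpow]
      have h1 : t₀ ^ (n - 1) ≠ 0 := pow_ne_zero _ ht₀0.ne'
      field_simp
    have huv : 0 ≤ u' t₀ * v t₀ := by simp only [hvdef]; exact mul_phi1_nonneg _
    have hFrb : |Fr t₀ (u t₀)| ≤ ω t₀ * FF t₀ :=
      (hA4' (u t₀) (hcoele (u t₀) (le_trans (hbound t₀ ht₀mem) hθa''))).2 t₀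
        ⟨ht₀.1.le, ht₀R.le⟩
    rw [hPd, hvd]
    have hωt : ω t₀ ≤ C := hC t₀ ⟨ht₀.1.le, ht₀R.le⟩
    have hFFt : 0 ≤ FF t₀ := hFFnn t₀ ht₀mem
    have hterm : u' t₀ * (-(lam * f t₀ (u t₀)) - (n : ℝ) * v t₀ / t₀)
          + lam * (Fr t₀ (u t₀) + f t₀ (u t₀) * u' t₀)
        = lam * Fr t₀ (u t₀) - (n : ℝ) * (u' t₀ * v t₀) / t₀ := by
      field_simp
      ring
    rw [hterm]
    have h5 : lam * Fr t₀ (u t₀) ≤ lam * (C * FF t₀) := by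
      have h5a : |Fr t₀ (u t₀)| ≤ C * FF t₀ :=
        le_trans hFrb (mul_le_mul_of_nonneg_right hωt hFFt)
      exact mul_le_mul_of_nonneg_left (le_trans (le_abs_self _) h5a) hlam
    have h6 : 0 ≤ (n : ℝ) * (u' t₀ * v t₀) / t₀ :=
      div_nonneg (mul_nonneg (Nat.cast_nonneg n) huv) ht₀0.le
    have h7 : lam * (C * FF t₀) ≤ C * H t₀ := by
      simp only [hHdef]
      nlinarith [hPnn t₀, hC0]
    calc lam * Fr t₀ (u t₀) - (n : ℝ) * (u' t₀ * v t₀) / t₀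
        ≤ lam * (C * FF t₀) - 0 := sub_le_sub h5 h6
    _ = lam * (C * FF t₀) := sub_zero _
    _ ≤ C * H t₀ := h7
  set G : ℝ → ℝ := fun t => H t * Real.exp (-C * t) with hGdef
  have hGcont : ContinuousOn G (Icc δ ρ) :=
    hHcont.mul ((Real.continuous_exp.comp (continuous_const.mul continuous_id)).continuousOn)
  have hGanti : AntitoneOn G (Icc δ ρ) := by
    apply antitoneOn_of_deriv_nonpos (convex_Icc δ ρ) hGcont
    · intro t ht
      rw [interior_Icc] at ht
      obtain ⟨y, hy, -⟩ := hkey t ht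
      have hexp : HasDerivAt (fun s : ℝ => Real.exp (-C * s)) (Real.exp (-C * t) * (-C)) t := by
        simpa using ((hasDerivAt_id t).const_mul (-C)).exp
      exact (hy.mul hexp).differentiableAt.differentiableWithinAt
    · intro t ht
      rw [interior_Icc] at ht
      obtain ⟨y, hy, hyle⟩ := hkey t ht
      have hexp : HasDerivAt (fun s : ℝ => Real.exp (-C * s)) (Real.exp (-C * t) * (-C)) t := by
        simpa using ((hasDerivAt_id t).const_mul (-C)).exp
      have hG_at : HasDerivAt G (y * Real.exp (-C * t) + H t * (Real.exp (-C * t) * (-C))) t :=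
        hy.mul hexp
      rw [hG_at.deriv]
      have he := Real.exp_pos (-C * t)
      nlinarith [mul_le_mul_of_nonneg_right hyle he.le]
  have hHbound : ∀ t ∈ Icc δ ρ, H t ≤ H δ * E := by
    intro t ht
    have hδmemρ : δ ∈ Icc δ ρ := ⟨le_refl δ, hδρ.le⟩
    have h1 : G t ≤ G δ := hGanti hδmemρ ht ht.1
    have h2 : H t = G t * Real.exp (C * t) := by
      simp only [hGdef]
      rw [mul_assoc, ← Real.exp_add]
      simp
    have h3 : G δ * Real.exp (C * t) = H δ * Real.exp (C * (t - δ)) := by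
      simp only [hGdef]
      rw [mul_assoc, ← Real.exp_add]
      ring_nf
    have hHδnn : 0 ≤ H δ := hHnn δ hδmemρ
    have h4 : Real.exp (C * (t - δ)) ≤ E := by
      rw [hEdef]
      apply Real.exp_le_exp.2
      have h4a : t ≤ R := le_trans ht.2 hρR
      nlinarith [hC0]
    calc H t = G t * Real.exp (C * t) := h2
    _ ≤ G δ * Real.exp (C * t) := mul_le_mul_of_nonneg_right h1 (Real.exp_pos _).le
    _ = H δ * Real.exp (C * (t - δ)) := h3
    _ ≤ H δ * E := mul_le_mul_of_nonneg_left h4 hHδnn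
  have hPδ0 : P δ = 0 := by
    simp only [hPdef, hvdef, hu'δ, phi1_zero]
    norm_num
  have hFFδ : |FF δ| ≤ B * |u δ| := by
    have hdmem : u δ ∈ Icc (-a'') a'' := humem δ ⟨le_refl δ, hδρ.le⟩
    have hbd : ∀ x ∈ Set.uIoc (0:ℝ) (u δ), ‖f δ x‖ ≤ B := by
      intro x hx
      have hxm : x ∈ Icc (-a'') a'' :=
        uIcc_subset_Icc ⟨by linarith, ha''0.le⟩ hdmem (uIoc_subset_uIcc hx)
      exact hB δ ⟨hδ, hδR.le⟩ x hxm
    have hnb := intervalIntegral.norm_integral_le_of_norm_le_const hbd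
    rw [Real.norm_eq_abs] at hnb
    simp only [hFFdef]
    calc |∫ x in (0:ℝ)..(u δ), f δ x| ≤ B * |u δ - 0| := hnb
    _ = B * |u δ| := by ring_nf
  have hHδle : H δ ≤ lam * (B * |u δ|) := by
    have h1 : lam * FF δ ≤ lam * (B * |u δ|) :=
      mul_le_mul_of_nonneg_left (le_trans (le_abs_self _) hFFδ) hlam
    simp only [hHdef, hPδ0]; linarith
  have hHη : ∀ t ∈ Icc δ ρ, H t ≤ M ^ 2 / 2 := by
    intro t ht
    have h1 := hHbound t ht
    have h2 : H δ * E ≤ lam * (B * |u δ|) * E := mul_le_mul_of_nonneg_right hHδle hE0.le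
    have h3 : lam * (B * |u δ|) * E ≤ M ^ 2 / 2 := by rw [hEdef]; exact hdη
    exact le_trans h1 (le_trans h2 h3)
  intro t ht
  have hu'le : ∀ s ∈ Icc δ ρ, |u' s| ≤ M := by
    intro s hs
    have hPs : P s ≤ M ^ 2 / 2 := by
      have h1 := hHη s hs
      have h2 := hFFnn s hs
      simp only [hHdef] at h1
      nlinarith
    refine abs_le_of_energy (hu'lt s (hsubρβ hs)) hM0.le hM1 ?_
    simpa only [hPdef, hvdef] using hPs
  refine ⟨?_, hu'le t ht⟩
  have hder : ∀ x ∈ Icc δ ρ, HasDerivWithinAt u (u' x) (Icc δ ρ) x :=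
    fun x hx => (hu x (hsubρβ hx)).mono hsubρβ
  have hlip := Convex.norm_image_sub_le_of_norm_hasDerivWithin_le hder
    (fun x hx => by rw [Real.norm_eq_abs]; exact hu'le x hx) (convex_Icc δ ρ)
    ⟨le_refl δ, hδρ.le⟩ ht
  have h8 : |u t - u δ| ≤ M * |t - δ| := by simpa [Real.norm_eq_abs] using hlip
  have h9 : |t - δ| ≤ R - δ := by
    rw [abs_of_nonneg (by linarith [ht.1])]
    have := le_trans ht.2 hρR; linarith
  have h10 : |u t| ≤ |u δ| + M * (R - δ) := by
    have h10a : |u t| ≤ |u δ| + |u t - u δ| := by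
      calc |u t| = |u δ + (u t - u δ)| := by ring_nf
      _ ≤ |u δ| + |u t - u δ| := abs_add_le _ _
    have h10b : |u t - u δ| ≤ M * (R - δ) :=
      le_trans h8 (mul_le_mul_of_nonneg_left h9 hM0.le)
    linarith
  linarith [hδM]

set_option maxHeartbeats 1000000 in
/-- Lemma 2.4. Under (A1) and (A4), for every `ε ∈ (0, 0.9]`
there is `d_ε ∈ (0, ε]` such that any local solution of the initial value
problem `(r^{N-1} φ₁(u'))' + λ r^{N-1} f(r,u) = 0`, `u(δ) = d`, `u'(δ) = 0` with
`|d| ≤ d_ε` satisfies `sup |u| + sup |u'| ≤ ε` on its interval of definition. -/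
theorem stmt7 (N : ℕ) (hN : 2 ≤ N) (δ R lam : ℝ) (hδ : 0 ≤ δ) (hδR : δ < R) (hlam : 0 ≤ lam)
    (α : EReal) (f : ℝ → ℝ → ℝ) (hA1 : CondA1 R α f) (hA4 : CondA4 δ R α f) :
    ∀ ε : ℝ, 0 < ε → ε ≤ 0.9 →
      ∃ dε : ℝ, 0 < dε ∧ dε ≤ ε ∧
        ∀ d β : ℝ, |d| ≤ dε → δ < β → β ≤ R →
        ∀ u u' : ℝ → ℝ,
          (∀ r ∈ Icc δ β, HasDerivWithinAt u (u' r) (Icc δ β) r) →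
          ContinuousOn u' (Icc δ β) →
          (∀ r ∈ Icc δ β, |u' r| < 1) →
          (∃ w' : ℝ → ℝ, ContinuousOn w' (Icc δ β) ∧
            (∀ r ∈ Icc δ β,
              HasDerivWithinAt (fun t => t ^ (N - 1) * phi1 (u' t)) (w' r) (Icc δ β) r) ∧
            ∀ r ∈ Ioo δ β, w' r + lam * r ^ (N - 1) * f r (u r) = 0) →
          u δ = d → u' δ = 0 →
          ∀ r ∈ Icc δ β, ∀ r' ∈ Icc δ β, |u r| + |u' r'| ≤ ε := by
  obtain ⟨hRα, hfcont, hsign⟩ := hA1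
  obtain ⟨Fr, ω, hωc, hωnn, hA4'⟩ := hA4
  obtain ⟨c, hc1, hc2⟩ := exists_between hRα
  have hcne_top : c ≠ ⊤ := hc2.ne_top
  have hcne_bot : c ≠ ⊥ := ne_bot_of_gt hc1
  set a'' : ℝ := c.toReal with ha''def
  have hcoe : (a'' : EReal) = c := EReal.coe_toReal hcne_top hcne_bot
  have hRa'' : R < a'' := by rw [← EReal.coe_lt_coe_iff, hcoe]; exact hc1
  have ha''α : (a'' : EReal) < α := by rw [hcoe]; exact hc2
  have ha''0 : 0 < a'' := lt_of_le_of_lt (le_trans hδ hδR.le) hRa''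
  have hcoele : ∀ x : ℝ, |x| ≤ a'' → ((|x| : ℝ) : EReal) < α := fun x hx =>
    lt_of_le_of_lt (by exact_mod_cast hx) ha''α
  set S₁ := {p : ℝ × ℝ | p.1 ∈ Icc 0 R ∧ ((|p.2| : ℝ) : EReal) < α} with hS₁
  have hslice : ∀ t ∈ Icc (0:ℝ) R, ContinuousOn (f t) (Icc (-a'') a'') := by
    intro t ht
    have hmap : MapsTo (fun x : ℝ => (t, x)) (Icc (-a'') a'') S₁ := by
      intro x hx
      exact ⟨ht, hcoele x (abs_le.2 ⟨hx.1, hx.2⟩)⟩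
    exact hfcont.comp ((continuous_const.prodMk continuous_id).continuousOn) hmap
  have hKsub : Icc (0:ℝ) R ×ˢ Icc (-a'') a'' ⊆ S₁ := fun p hp =>
    ⟨hp.1, hcoele p.2 (abs_le.2 ⟨hp.2.1, hp.2.2⟩)⟩
  obtain ⟨B₀, hB₀⟩ := (isCompact_Icc.prod isCompact_Icc).exists_bound_of_continuousOn
    (hfcont.mono hKsub)
  set B := max B₀ 0 with hBdef
  have hB : ∀ t ∈ Icc (0:ℝ) R, ∀ x ∈ Icc (-a'') a'', |f t x| ≤ B := fun t ht x hx =>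
    le_trans (hB₀ (t, x) ⟨ht, hx⟩) (le_max_left _ _)
  have hB0 : 0 ≤ B := le_max_right _ _
  obtain ⟨C₀, hC₀⟩ := isCompact_Icc.exists_bound_of_continuousOn hωc
  set C := max C₀ 0 with hCdef
  have hC : ∀ r ∈ Icc δ R, ω r ≤ C := fun r hr =>
    le_trans (le_trans (le_abs_self _) (hC₀ r hr)) (le_max_left _ _)
  have hC0 : 0 ≤ C := le_max_right _ _
  intro ε hε hε9
  set θ := a'' / 2 with hθdef
  have hθ0 : 0 < θ := by positivity
  have hθa'' : θ ≤ a'' := by rw [hθdef]; linarith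
  set M := min ε θ / (2 * (1 + (R - δ))) with hMdef
  have hRδ0 : 0 < 1 + (R - δ) := by linarith
  have hminεθ : 0 < min ε θ := lt_min hε hθ0
  have hM0 : 0 < M := by positivity
  have hMhalf : M * (2 * (1 + (R - δ))) = min ε θ := by
    rw [hMdef]; field_simp
  have hMε : M ≤ ε / 2 := by
    have h1 : min ε θ ≤ ε := min_le_left _ _
    nlinarith [hM0.le]
  have hMθ : M ≤ θ / 2 := by
    have h1 : min ε θ ≤ θ := min_le_right _ _
    nlinarith [hM0.le]
  have hM1 : M ≤ 1 := by nlinarith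
  set E := Real.exp (C * (R - δ)) with hEdef
  have hE0 : 0 < E := Real.exp_pos _
  set dε := min M ((M ^ 2 / 2) / (lam * B * E + 1)) with hdεdef
  have hq0 : 0 < lam * B * E + 1 := by positivity
  have hdε0 : 0 < dε := lt_min hM0 (by positivity)
  have hdεM : dε ≤ M := min_le_left _ _
  refine ⟨dε, hdε0, by linarith, ?_⟩
  intro d β hd hδβ hβR u u' hu hu'c hu'lt hode hud hu'δ
  obtain ⟨w', hw'c, hw, hODE⟩ := hode
  have hδmem : δ ∈ Icc δ β := ⟨le_refl δ, hδβ.le⟩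
  have hucont : ContinuousOn u (Icc δ β) := fun r hr => (hu r hr).continuousWithinAt
  have hn1 : 1 ≤ N - 1 := by omega
  have hδM : |u δ| ≤ M := by rw [hud]; exact le_trans hd hdεM
  have hdη : lam * (B * |u δ|) * Real.exp (C * (R - δ)) ≤ M ^ 2 / 2 := by
    have h1 : |u δ| ≤ (M ^ 2 / 2) / (lam * B * E + 1) := by
      rw [hud]; exact le_trans hd (min_le_right _ _)
    have h2 : |u δ| * (lam * B * E + 1) ≤ M ^ 2 / 2 := (le_div_iff₀ hq0).1 h1
    have h3 : lam * (B * |u δ|) * E ≤ M ^ 2 / 2 := by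
      nlinarith [abs_nonneg (u δ), mul_nonneg (mul_nonneg hlam hB0) hE0.le]
    rw [← hEdef]; exact h3
  have core : ∀ ρ, δ < ρ → ρ ≤ β → (∀ t ∈ Icc δ ρ, |u t| ≤ θ) →
      ∀ t ∈ Icc δ ρ, |u t| ≤ M * (1 + (R - δ)) ∧ |u' t| ≤ M := by
    intro ρ h1 h2 h3
    refine core_est δ R lam a'' B C M α f Fr ω (N - 1) hn1 hδ hδR hlam ha''α ha''0 hsign
      hfcont hslice hB hB0 hA4' hC hC0 hM0 hM1 β ρ hδβ hβR h1 h2 u u' w' hu hu'c hu'lt hw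
      hODE hu'δ ?_ hδM hdη
    intro t ht
    rw [← hθdef]
    exact h3 t ht
  have hMR : M * (1 + (R - δ)) = min ε θ / 2 := by rw [← hMhalf]; ring
  have hboot : ∀ t ∈ Icc δ β, |u t| ≤ θ := by
    set Sset := {r : ℝ | r ∈ Icc δ β ∧ ∀ t ∈ Icc δ r, |u t| ≤ θ} with hSdef
    have hδS : δ ∈ Sset := by
      refine ⟨hδmem, ?_⟩
      intro t ht
      have h : t = δ := le_antisymm ht.2 ht.1
      rw [h]
      linarith [hδM]
    have hbddS : BddAbove Sset := ⟨β, fun r hr => hr.1.2⟩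
    have hneS : Sset.Nonempty := ⟨δ, hδS⟩
    set ρ₀ := sSup Sset with hρ₀def
    have hδρ₀ : δ ≤ ρ₀ := le_csSup hbddS hδS
    have hρ₀β : ρ₀ ≤ β := csSup_le hneS (fun r hr => hr.1.2)
    have hρ₀mem : ρ₀ ∈ Icc δ β := ⟨hδρ₀, hρ₀β⟩
    have hIco : ∀ t ∈ Ico δ ρ₀, |u t| ≤ θ := by
      intro t ht
      obtain ⟨r, hrS, hrt⟩ := exists_lt_of_lt_csSup hneS ht.2
      exact hrS.2 t ⟨ht.1, hrt.le⟩
    have hSfull : ∀ t ∈ Icc δ ρ₀, |u t| ≤ θ := by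
      intro t ht
      rcases lt_or_eq_of_le ht.2 with h | h
      · exact hIco t ⟨ht.1, h⟩
      · rcases eq_or_lt_of_le hδρ₀ with hδeq | hδlt
        · rw [h, ← hδeq]
          linarith [hδM]
        · have hne : (𝓝[Ico δ ρ₀] ρ₀).NeBot := by
            rw [nhdsWithin_Ico_eq_nhdsLT hδlt]; infer_instance
          have htd : Tendsto (fun s => |u s|) (𝓝[Ico δ ρ₀] ρ₀) (𝓝 |u ρ₀|) := by
            have hcw : ContinuousWithinAt u (Icc δ β) ρ₀ := hucont ρ₀ hρ₀mem
            have hsub2 : Ico δ ρ₀ ⊆ Icc δ β := fun x hx => ⟨hx.1, le_trans hx.2.le hρ₀β⟩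
            have h2 := (hcw.mono hsub2).tendsto
            exact (continuous_abs.tendsto _).comp h2
          rw [h]
          exact le_of_tendsto htd
            (by filter_upwards [eventually_mem_nhdsWithin] with s hs; exact hIco s hs)
    have hρ₀eq : ρ₀ = β := by
      by_contra hne2
      have hρ₀ltβ : ρ₀ < β := lt_of_le_of_ne hρ₀β hne2
      have himpr : ∀ t ∈ Icc δ ρ₀, |u t| ≤ θ / 2 := by
        rcases eq_or_lt_of_le hδρ₀ with hδeq | hδlt
        · intro t ht
          have h : t = δ := le_antisymm (le_trans ht.2 hδeq.symm.le) ht.1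
          rw [h]
          linarith [hδM]
        · intro t ht
          have h1 := (core ρ₀ hδlt hρ₀β hSfull t ht).1
          have h2 : min ε θ ≤ θ := min_le_right ε θ
          rw [hMR] at h1
          linarith
      have hcw : ContinuousWithinAt u (Icc δ β) ρ₀ := hucont ρ₀ hρ₀mem
      have hev : {t : ℝ | |u t| < θ} ∈ 𝓝[Icc δ β] ρ₀ := by
        have hval : |u ρ₀| < θ := lt_of_le_of_lt (himpr ρ₀ ⟨hδρ₀, le_refl _⟩) (by linarith)
        have hset : {y : ℝ | |y| < θ} ∈ 𝓝 (u ρ₀) :=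
          (isOpen_lt continuous_abs continuous_const).mem_nhds hval
        exact hcw hset
      obtain ⟨ε₁, hε₁0, hball⟩ := Metric.mem_nhdsWithin_iff.1 hev
      set r := min β (ρ₀ + ε₁ / 2) with hrdef
      have hrρ₀ : ρ₀ < r := lt_min hρ₀ltβ (by linarith)
      have hrS : r ∈ Sset := by
        refine ⟨⟨le_trans hδρ₀ hrρ₀.le, min_le_left _ _⟩, ?_⟩
        intro t ht
        rcases le_or_gt t ρ₀ with hcase | hcase
        · exact hSfull t ⟨ht.1, hcase⟩
        · have htmem : t ∈ Metric.ball ρ₀ ε₁ ∩ Icc δ β := by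
            constructor
            · rw [Metric.mem_ball, Real.dist_eq, abs_of_pos (by linarith)]
              have h3 : t ≤ ρ₀ + ε₁ / 2 := le_trans ht.2 (min_le_right _ _)
              linarith
            · exact ⟨ht.1, le_trans ht.2 (min_le_left _ _)⟩
          exact (hball htmem).le
      exact absurd (le_csSup hbddS hrS) (not_le.2 hrρ₀)
    intro t ht
    exact hSfull t (hρ₀eq ▸ ht)
  intro r hr r' hr'
  obtain ⟨h1, -⟩ := core β hδβ le_rfl hboot r hr
  obtain ⟨-, h2⟩ := core β hδβ le_rfl hboot r' hr'
  rw [hMR] at h1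
  have h3 : min ε θ / 2 ≤ ε / 2 := by
    have := min_le_left ε θ; linarith
  linarith
end

section
/- Let N ≥ 2 be an integer, 0 ≤ δ < R, λ ≥ 0, and let f satisfy (A1) and (A4). Let u ∈ C¹([δ,R]) with |u'(r)| < 1 for all r be such that r ↦ r^{N−1}φ₁(u'(r)) is continuously differentiable and (r^{N−1}φ₁(u'))' + λ r^{N−1} f(r,u) = 0 on (δ,R). If u(r₀) = u'(r₀) = 0 for some r₀ ∈ (δ,R], then u ≡ 0 on [δ,R]. -/
open Set Filter Topology

section AuxStmt8

lemma sqrt_one_sub_pos {s : ℝ} (hs : s ^ 2 < 1) : 0 < Real.sqrt (1 - s ^ 2) :=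
  Real.sqrt_pos.2 (by linarith)

lemma aux_sqrt_phi1 {s : ℝ} (hs : s ^ 2 < 1) :
    Real.sqrt (1 + phi1 s ^ 2) = 1 / Real.sqrt (1 - s ^ 2) := by
  set c := Real.sqrt (1 - s ^ 2) with hc
  have hcpos : 0 < c := sqrt_one_sub_pos hs
  have hc2 : c ^ 2 = 1 - s ^ 2 := Real.sq_sqrt (by linarith)
  have : 1 + phi1 s ^ 2 = (1 / c) ^ 2 := by
    rw [phi1, ← hc]; field_simp; nlinarith
  rw [this, Real.sqrt_sq (by positivity)]

lemma aux_phi1inv {s : ℝ} (hs : s ^ 2 < 1) :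
    phi1 s / Real.sqrt (1 + phi1 s ^ 2) = s := by
  rw [aux_sqrt_phi1 hs, phi1]
  have hcpos : 0 < Real.sqrt (1 - s ^ 2) := sqrt_one_sub_pos hs
  field_simp

lemma aux_sphi1_nonneg {s : ℝ} (hs : s ^ 2 < 1) : 0 ≤ s * phi1 s := by
  have hcpos : 0 < Real.sqrt (1 - s ^ 2) := sqrt_one_sub_pos hs
  rw [phi1]
  have : s * (s / Real.sqrt (1 - s ^ 2)) = s ^ 2 / Real.sqrt (1 - s ^ 2) := by ring
  rw [this]; positivity

lemma aux_sphi1_le {s : ℝ} (hs : s ^ 2 < 1) :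
    s * phi1 s ≤ 2 * (Real.sqrt (1 + phi1 s ^ 2) - 1) := by
  rw [aux_sqrt_phi1 hs, phi1]
  set c := Real.sqrt (1 - s ^ 2) with hc
  have hcpos : 0 < c := sqrt_one_sub_pos hs
  have hc2 : c ^ 2 = 1 - s ^ 2 := Real.sq_sqrt (by linarith)
  have hc1 : c ≤ 1 := by nlinarith
  have he : s * (s / c) = s ^ 2 / c := by ring
  rw [he, div_le_iff₀ hcpos]
  have e : (1 / c) * c = 1 := one_div_mul_cancel hcpos.ne'
  nlinarith [e, hc2, hc1, sq_nonneg (1 - c)]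

lemma aux_sqrt_ge_one (v : ℝ) : 1 ≤ Real.sqrt (1 + v ^ 2) := by
  calc (1:ℝ) = Real.sqrt 1 := Real.sqrt_one.symm
  _ ≤ Real.sqrt (1 + v ^ 2) := Real.sqrt_le_sqrt (by nlinarith)

lemma aux_E_zero {s : ℝ} (hs : s ^ 2 < 1)
    (h : Real.sqrt (1 + phi1 s ^ 2) - 1 = 0) : s = 0 := by
  have hinv := aux_phi1inv hs
  rw [show Real.sqrt (1 + phi1 s ^ 2) = 1 by linarith] at hinv
  have hcpos : 0 < Real.sqrt (1 - s ^ 2) := sqrt_one_sub_pos hs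
  rw [aux_sqrt_phi1 hs] at h
  field_simp at h
  rw [phi1] at hinv
  simp at hinv
  nlinarith [hinv, Real.sq_sqrt (show (0:ℝ) ≤ 1 - s^2 by linarith)]

lemma aux_mem_uIoc_abs {a b x : ℝ} (hx : x ∈ Set.uIoc a b) : |x - a| ≤ |b - a| := by
  rw [Set.mem_uIoc] at hx
  rcases hx with ⟨h1, h2⟩ | ⟨h1, h2⟩ <;> rw [abs_le] <;>
    constructor <;> [linarith [neg_abs_le (b-a), le_abs_self (b-a)];
      linarith [neg_abs_le (b-a), le_abs_self (b-a)];
      linarith [neg_abs_le (b-a), le_abs_self (b-a)];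
      linarith [neg_abs_le (b-a), le_abs_self (b-a)]]

end AuxStmt8
set_option maxHeartbeats 1000000 in
/-- Lemma 2.5. Under (A1) and (A4), a solution of
`(r^{N-1} φ₁(u'))' + λ r^{N-1} f(r,u) = 0` on `(δ,R)` vanishing to first order
at some `r₀ ∈ (δ,R]` is identically zero on `[δ,R]`. -/
theorem stmt8 (N : ℕ) (hN : 2 ≤ N) (δ R lam : ℝ) (hδ : 0 ≤ δ) (hδR : δ < R) (hlam : 0 ≤ lam)
    (α : EReal) (f : ℝ → ℝ → ℝ) (hA1 : CondA1 R α f) (hA4 : CondA4 δ R α f)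
    (u u' : ℝ → ℝ)
    (hu : ∀ r ∈ Icc δ R, HasDerivWithinAt u (u' r) (Icc δ R) r)
    (hu'c : ContinuousOn u' (Icc δ R))
    (hu'lt : ∀ r ∈ Icc δ R, |u' r| < 1)
    (w' : ℝ → ℝ) (hw'c : ContinuousOn w' (Icc δ R))
    (hw : ∀ r ∈ Icc δ R,
      HasDerivWithinAt (fun t => t ^ (N - 1) * phi1 (u' t)) (w' r) (Icc δ R) r)
    (heq : ∀ r ∈ Ioo δ R, w' r + lam * r ^ (N - 1) * f r (u r) = 0)
    (r₀ : ℝ) (hr₀ : r₀ ∈ Ioc δ R) (hur₀ : u r₀ = 0) (hu'r₀ : u' r₀ = 0) :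
    ∀ r ∈ Icc δ R, u r = 0 := by
  obtain ⟨hRα, hfc, hfsign⟩ := hA1
  obtain ⟨Fr, ω, hωc, hωnn, hA4'⟩ := hA4
  have hR0 : 0 < R := lt_of_le_of_lt hδ hδR
  have hr₀I : r₀ ∈ Icc δ R := ⟨hr₀.1.le, hr₀.2⟩
  have hIcc0R : Icc δ R ⊆ Icc 0 R := Icc_subset_Icc hδ le_rfl
  have hKR : ∀ x : ℝ, |x| ≤ R → ((|x| : ℝ) : EReal) < α :=
    fun x hx => lt_of_le_of_lt (EReal.coe_le_coe_iff.2 hx) hRα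
  -- the bound b < 1 on |u'|
  obtain ⟨rb, hrbI, hrb⟩ := isCompact_Icc.exists_isMaxOn ⟨δ, le_refl δ, hδR.le⟩
    (continuous_abs.comp_continuousOn hu'c)
  set b := |u' rb| with hbdef
  have hb1 : b < 1 := hu'lt rb hrbI
  have hb0 : 0 ≤ b := abs_nonneg _
  have hub : ∀ r ∈ Icc δ R, |u' r| ≤ b := fun r hr => hrb hr
  have hsq : ∀ r ∈ Icc δ R, (u' r) ^ 2 < 1 := fun r hr => by
    nlinarith [hu'lt r hr, sq_abs (u' r), abs_nonneg (u' r)]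
  -- Lipschitz estimate
  have hlip : ∀ x ∈ Icc δ R, ∀ y ∈ Icc δ R, |u y - u x| ≤ b * |y - x| := by
    intro x hx y hy
    have := (convex_Icc δ R).norm_image_sub_le_of_norm_hasDerivWithin_le hu
      (fun z hz => by simpa [Real.norm_eq_abs] using hub z hz) hx hy
    simpa [Real.norm_eq_abs] using this
  set S₀ := b * (R - δ) with hS₀def
  have hS₀R : S₀ < R := by nlinarith
  have hS₀0 : 0 ≤ S₀ := by rw [hS₀def]; exact mul_nonneg hb0 (by linarith)
  have huS₀ : ∀ r ∈ Icc δ R, |u r| ≤ S₀ := by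
    intro r hr
    have h1 := hlip r₀ hr₀I r hr
    rw [hur₀, sub_zero] at h1
    refine h1.trans ?_
    have h2 : |r - r₀| ≤ R - δ := by
      rw [abs_le]
      constructor <;> [linarith [hr.1, hr₀.2]; linarith [hr.2, hr₀.1.le]]
    nlinarith
  have huR : ∀ r ∈ Icc δ R, |u r| < R := fun r hr => lt_of_le_of_lt (huS₀ r hr) hS₀R
  have hαu : ∀ r ∈ Icc δ R, ((|u r| : ℝ) : EReal) < α := fun r hr => hKR _ (huR r hr).le
  -- one-variable continuity and integrability of f t
  have hfr : ∀ t ∈ Icc 0 R, ContinuousOn (f t) (Icc (-R) R) := by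
    intro t ht
    have h : ContinuousOn ((fun p : ℝ × ℝ => f p.1 p.2) ∘ (fun x => (t, x))) (Icc (-R) R) := by
      refine hfc.comp ((continuous_const.prodMk continuous_id).continuousOn) ?_
      intro x hx
      exact ⟨ht, hKR x (abs_le.2 ⟨hx.1, hx.2⟩)⟩
    exact h
  have hint : ∀ t ∈ Icc 0 R, ∀ a c : ℝ, |a| ≤ R → |c| ≤ R →
      IntervalIntegrable (f t) MeasureTheory.volume a c := by
    intro t ht a c ha hc
    refine ((hfr t ht).mono ?_).intervalIntegrable
    rw [show Icc (-R) R = uIcc (-R) R from (uIcc_of_le (by linarith)).symm]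
    refine uIcc_subset_uIcc ?_ ?_ <;> rw [mem_uIcc] <;> left <;> constructor <;>
      [linarith [neg_abs_le a, le_abs_self a]; linarith [neg_abs_le a, le_abs_self a];
       linarith [neg_abs_le c, le_abs_self c]; linarith [neg_abs_le c, le_abs_self c]]
  -- sign of f
  have hfpos : ∀ t ∈ Icc 0 R, ∀ x : ℝ, 0 < x → x ≤ R → 0 < f t x := by
    intro t ht x hx hxR
    have h := hfsign t ht x (hKR x (by rw [abs_of_pos hx]; exact hxR)) (ne_of_gt hx)
    nlinarith
  have hfneg : ∀ t ∈ Icc 0 R, ∀ x : ℝ, -R ≤ x → x < 0 → f t x < 0 := by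
    intro t ht x hxR hx
    have h := hfsign t ht x (hKR x (by rw [abs_of_neg hx]; linarith)) (ne_of_lt hx)
    nlinarith
  -- f t 0 = 0
  have hf0 : ∀ t ∈ Icc 0 R, f t 0 = 0 := by
    intro t ht
    have hcw : ContinuousWithinAt (f t) (Icc (-R) R) 0 := (hfr t ht) 0 ⟨by linarith, hR0.le⟩
    haveI hner : (𝓝[Ioc 0 R] (0:ℝ)).NeBot := by
      rw [← mem_closure_iff_nhdsWithin_neBot, closure_Ioc hR0.ne]
      exact ⟨le_rfl, hR0.le⟩
    haveI hnel : (𝓝[Ico (-R) 0] (0:ℝ)).NeBot := by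
      rw [← mem_closure_iff_nhdsWithin_neBot, closure_Ico (show (-R) ≠ 0 by linarith)]
      exact ⟨by linarith, le_rfl⟩
    have t1 : Tendsto (f t) (𝓝[Ioc 0 R] 0) (𝓝 (f t 0)) :=
      hcw.mono (fun x hx => ⟨by linarith [hx.1], hx.2⟩)
    have hge : 0 ≤ f t 0 := ge_of_tendsto t1 (by
      filter_upwards [self_mem_nhdsWithin] with x hx
      exact (hfpos t ht x hx.1 hx.2).le)
    have t2 : Tendsto (f t) (𝓝[Ico (-R) 0] 0) (𝓝 (f t 0)) :=
      hcw.mono (fun x hx => ⟨hx.1, by linarith [hx.2]⟩)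
    have hle : f t 0 ≤ 0 := le_of_tendsto t2 (by
      filter_upwards [self_mem_nhdsWithin] with x hx
      exact (hfneg t ht x hx.1 hx.2).le)
    linarith
  -- nonnegativity of F
  have hFnn : ∀ t ∈ Icc 0 R, ∀ s : ℝ, |s| ≤ R → 0 ≤ ∫ x in (0:ℝ)..s, f t x := by
    intro t ht s hsR
    rcases le_total 0 s with hs | hs
    · apply intervalIntegral.integral_nonneg hs
      intro x hx
      rcases eq_or_lt_of_le hx.1 with he | hlt
      · rw [← he, hf0 t ht]
      · exact (hfpos t ht x hlt (hx.2.trans (le_trans (le_abs_self s) hsR))).le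
    · rw [intervalIntegral.integral_symm s 0]
      have h : 0 ≤ ∫ x in s..(0:ℝ), -(f t x) := by
        apply intervalIntegral.integral_nonneg hs
        intro x hx
        rcases eq_or_lt_of_le hx.2 with he | hlt
        · rw [he, hf0 t ht]; simp
        · simp only [neg_nonneg]
          refine (hfneg t ht x ?_ hlt).le
          have := neg_abs_le s; linarith [hx.1]
      rw [intervalIntegral.integral_neg] at h
      linarith
  -- derivative of t ↦ F t (u t)
  have hFd : ∀ r ∈ Icc δ R, HasDerivWithinAt (fun t => ∫ x in (0:ℝ)..u t, f t x)
      (Fr r (u r) + f r (u r) * u' r) (Icc δ R) r := by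
    intro r hrI
    have hFr0 : HasDerivWithinAt (fun t => ∫ x in (0:ℝ)..u r, f t x)
        (Fr r (u r)) (Icc δ R) r := (hA4' (u r) (hαu r hrI)).1 r hrI
    set A : ℝ → ℝ := fun t => ∫ x in (u r)..(u t), (f t x - f r (u r)) with hA
    have hA0 : HasDerivWithinAt A 0 (Icc δ R) r := by
      rw [hasDerivWithinAt_iff_isLittleO]
      have hAr : A r = 0 := by simp [hA]
      simp only [hAr, smul_zero, sub_zero]
      rw [Asymptotics.isLittleO_iff]
      intro c hc
      have hz : (r, u r) ∈ {p : ℝ × ℝ | p.1 ∈ Icc 0 R ∧ ((|p.2| : ℝ) : EReal) < α} :=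
        ⟨hIcc0R hrI, hαu r hrI⟩
      have hcw := hfc _ hz
      rw [Metric.continuousWithinAt_iff] at hcw
      obtain ⟨ρ, hρ, hball⟩ := hcw c hc
      set ρ₂ := min ρ (R - S₀) with hρ₂def
      have hρ₂ : 0 < ρ₂ := lt_min hρ (by linarith)
      have h1 : ∀ᶠ t in 𝓝[Icc δ R] r, dist t r < ρ₂ := by
        filter_upwards [mem_nhdsWithin_of_mem_nhds (Metric.ball_mem_nhds r hρ₂)] with t ht
        exact ht
      filter_upwards [h1, self_mem_nhdsWithin] with t hdist htI
      have hut : |u t - u r| ≤ b * |t - r| := hlip r hrI t htI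
      have htr : |t - r| < ρ₂ := by rwa [Real.dist_eq] at hdist
      have key : ∀ x ∈ Set.uIoc (u r) (u t), ‖f t x - f r (u r)‖ ≤ c := by
        intro x hx
        have hxr : |x - u r| ≤ |u t - u r| := aux_mem_uIoc_abs hx
        have hxd : |x - u r| < ρ₂ := by nlinarith [abs_nonneg (t - r)]
        have hxabs : |x| < R := by
          have h3 := huS₀ r hrI
          have h4 : ρ₂ ≤ R - S₀ := by rw [hρ₂def]; exact min_le_right _ _
          have := abs_sub_abs_le_abs_sub x (u r)
          linarith
        have hmem : (t, x) ∈ {p : ℝ × ℝ | p.1 ∈ Icc 0 R ∧ ((|p.2| : ℝ) : EReal) < α} :=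
          ⟨hIcc0R htI, hKR x hxabs.le⟩
        have hρ₂ρ : ρ₂ ≤ ρ := by rw [hρ₂def]; exact min_le_left _ _
        have hd : dist (t, x) (r, u r) < ρ := by
          rw [Prod.dist_eq]
          refine max_lt (lt_of_lt_of_le ?_ hρ₂ρ) (lt_of_lt_of_le ?_ hρ₂ρ)
          · rwa [Real.dist_eq]
          · rw [Real.dist_eq]; exact hxd
        have := hball hmem hd
        rw [Real.dist_eq] at this
        exact this.le
      have hnorm := intervalIntegral.norm_integral_le_of_norm_le_const key
      refine hnorm.trans ?_
      rw [Real.norm_eq_abs]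
      have : |u t - u r| ≤ |t - r| := hut.trans (by nlinarith [abs_nonneg (t - r)])
      nlinarith [abs_nonneg (t - r), abs_nonneg (u t - u r)]
    have hlin : HasDerivWithinAt (fun t => f r (u r) * (u t - u r))
        (f r (u r) * u' r) (Icc δ R) r := ((hu r hrI).sub_const _).const_mul _
    have hsum := hFr0.add (hA0.add hlin)
    have heqfun : ∀ t ∈ Icc δ R, (fun t => ∫ x in (0:ℝ)..u t, f t x) t =
        (fun t => (∫ x in (0:ℝ)..u r, f t x) + (A t + f r (u r) * (u t - u r))) t := by
      intro t htI
      simp only [hA]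
      have hi1 : IntervalIntegrable (f t) MeasureTheory.volume 0 (u t) :=
        hint t (hIcc0R htI) 0 (u t) (by simp [hR0.le]) (huR t htI).le
      have hi2 : IntervalIntegrable (f t) MeasureTheory.volume 0 (u r) :=
        hint t (hIcc0R htI) 0 (u r) (by simp [hR0.le]) (huR r hrI).le
      have hi3 : IntervalIntegrable (f t) MeasureTheory.volume (u r) (u t) :=
        hint t (hIcc0R htI) (u r) (u t) (huR r hrI).le (huR t htI).le
      have e1 : (∫ x in (0:ℝ)..u t, f t x) - ∫ x in (0:ℝ)..u r, f t x
          = ∫ x in (u r)..(u t), f t x :=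
        intervalIntegral.integral_interval_sub_left hi1 hi2
      have e2 : (∫ x in (u r)..(u t), (f t x - f r (u r)))
          = (∫ x in (u r)..(u t), f t x) - ∫ x in (u r)..(u t), f r (u r) :=
        intervalIntegral.integral_sub hi3 (intervalIntegrable_const)
      rw [intervalIntegral.integral_const] at e2
      simp only [smul_eq_mul] at e2
      linarith [e1, e2]
    have hfinal := hsum.congr heqfun (heqfun r hrI)
    exact hfinal.congr_deriv (by ring)
  -- the energy function
  set E : ℝ → ℝ := fun t => lam * (∫ x in (0:ℝ)..u t, f t x)
    + (Real.sqrt (1 + phi1 (u' t) ^ 2) - 1) with hEdef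
  have hE0 : ∀ t ∈ Icc δ R, 0 ≤ E t := by
    intro t ht
    have h1 : 0 ≤ ∫ x in (0:ℝ)..u t, f t x := hFnn t (hIcc0R ht) (u t) (huR t ht).le
    have h2 := aux_sqrt_ge_one (phi1 (u' t))
    rw [hEdef]
    have := mul_nonneg hlam h1
    dsimp only
    linarith
  have hEr₀ : E r₀ = 0 := by
    rw [hEdef]
    dsimp only
    rw [hur₀, hu'r₀, intervalIntegral.integral_same]
    simp [phi1, Real.sqrt_one]
  have hEc : ContinuousOn E (Icc δ R) := by
    have hvc : ContinuousOn (fun t => phi1 (u' t)) (Icc δ R) := by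
      have h1 : ContinuousOn (fun t => Real.sqrt (1 - u' t ^ 2)) (Icc δ R) :=
        Real.continuous_sqrt.comp_continuousOn (continuousOn_const.sub (hu'c.pow 2))
      have h2 := hu'c.div h1 (fun t ht => (Real.sqrt_pos.2 (by nlinarith [hsq t ht])).ne')
      exact h2
    exact (continuousOn_const.mul (fun r hr => (hFd r hr).continuousWithinAt)).add
      ((Real.continuous_sqrt.comp_continuousOn (continuousOn_const.add (hvc.pow 2))).sub
        continuousOn_const)
  -- bound on ω
  obtain ⟨Ω₀, hΩ₀⟩ := isCompact_Icc.exists_bound_of_continuousOn hωc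
  set Ω := max Ω₀ 0 with hΩdef
  have hΩ0 : 0 ≤ Ω := le_max_right _ _
  have hΩ : ∀ x ∈ Icc δ R, ω x ≤ Ω :=
    fun x hx => le_trans (le_trans (le_abs_self _) (hΩ₀ x hx)) (le_max_left _ _)
  set c1 : ℝ := ((N : ℝ) - 1) with hc1def
  have hc1 : 0 < c1 := by
    have : (2:ℝ) ≤ (N:ℝ) := by exact_mod_cast hN
    rw [hc1def]; linarith
  -- derivative of E at interior points, with bound
  have hEd : ∀ r ∈ Ioo δ R, ∃ d : ℝ, HasDerivAt E d r ∧ |d| ≤ (Ω + 2 * c1 / r) * E r := by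
    intro r hr
    have hrI : r ∈ Icc δ R := ⟨hr.1.le, hr.2.le⟩
    have hrpos : 0 < r := lt_of_le_of_lt hδ hr.1
    have hnhds : Icc δ R ∈ 𝓝 r := Icc_mem_nhds hr.1 hr.2
    have hpne : r ^ (N - 1) ≠ 0 := pow_ne_zero _ hrpos.ne'
    have hW : HasDerivAt (fun t => t ^ (N - 1) * phi1 (u' t)) (w' r) r :=
      (hw r hrI).hasDerivAt hnhds
    have hpow : HasDerivAt (fun t : ℝ => t ^ (N - 1)) (c1 * r ^ (N - 2)) r := by
      have h := hasDerivAt_pow (N - 1) r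
      have e1 : ((N - 1 : ℕ) : ℝ) = c1 := by
        rw [hc1def, Nat.cast_sub (by omega : 1 ≤ N)]; norm_num
      have e2 : N - 1 - 1 = N - 2 := by omega
      rw [e1, e2] at h
      exact h
    set vd := (w' r * r ^ (N - 1) - (r ^ (N - 1) * phi1 (u' r)) * (c1 * r ^ (N - 2)))
      / (r ^ (N - 1)) ^ 2 with hvddef
    have hdivd : HasDerivAt (fun t => (t ^ (N - 1) * phi1 (u' t)) / t ^ (N - 1)) vd r :=
      hW.div hpow hpne
    have hveq : (fun t => phi1 (u' t)) =ᶠ[𝓝 r]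
        (fun t => (t ^ (N - 1) * phi1 (u' t)) / t ^ (N - 1)) := by
      filter_upwards [isOpen_Ioi.eventually_mem (show r ∈ Ioi (0:ℝ) from hrpos)] with t ht
      have htne : t ^ (N - 1) ≠ 0 := pow_ne_zero _ (ne_of_gt ht)
      field_simp
    have hv : HasDerivAt (fun t => phi1 (u' t)) vd r := hdivd.congr_of_eventuallyEq hveq
    have hinner : HasDerivAt (fun t => 1 + phi1 (u' t) ^ 2) (2 * phi1 (u' r) * vd) r := by
      have h := (hv.pow 2).const_add 1
      exact h.congr_deriv (by push_cast; ring)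
    have hs2 : (u' r) ^ 2 < 1 := hsq r hrI
    have hsqpos : (0:ℝ) < 1 + phi1 (u' r) ^ 2 := by positivity
    have hsne : Real.sqrt (1 + phi1 (u' r) ^ 2) ≠ 0 := (Real.sqrt_pos.2 hsqpos).ne'
    have hsqrt : HasDerivAt (fun t => Real.sqrt (1 + phi1 (u' t) ^ 2)) (u' r * vd) r := by
      have h := hinner.sqrt hsqpos.ne'
      convert h using 1
      have key := aux_phi1inv hs2
      calc u' r * vd = (phi1 (u' r) / Real.sqrt (1 + phi1 (u' r) ^ 2)) * vd := by rw [key]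
        _ = 2 * phi1 (u' r) * vd / (2 * Real.sqrt (1 + phi1 (u' r) ^ 2)) := by
            field_simp [hsne]
    have hFd' : HasDerivAt (fun t => ∫ x in (0:ℝ)..u t, f t x)
        (Fr r (u r) + f r (u r) * u' r) r := (hFd r hrI).hasDerivAt hnhds
    have hE : HasDerivAt E (lam * (Fr r (u r) + f r (u r) * u' r) + u' r * vd) r := by
      rw [hEdef]
      exact (hFd'.const_mul lam).add (hsqrt.sub_const 1)
    refine ⟨_, hE, ?_⟩
    have hw'e : w' r = -(lam * r ^ (N - 1) * f r (u r)) := by linarith [heq r hr]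
    have hdeq : lam * (Fr r (u r) + f r (u r) * u' r) + u' r * vd
        = lam * Fr r (u r) - c1 / r * (u' r * phi1 (u' r)) := by
      rw [hvddef, hw'e]
      have hp : r ^ (N - 1) = r ^ (N - 2) * r := by
        rw [← pow_succ]; congr 1; omega
      rw [hp]
      have h2 : r ^ (N - 2) ≠ 0 := pow_ne_zero _ hrpos.ne'
      field_simp
      ring
    rw [hdeq]
    have hFrb : |Fr r (u r)| ≤ ω r * ∫ x in (0:ℝ)..u r, f r x := (hA4' (u r) (hαu r hrI)).2 r hrI
    have hsv0 : 0 ≤ u' r * phi1 (u' r) := aux_sphi1_nonneg hs2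
    have hsvle : u' r * phi1 (u' r) ≤ 2 * (Real.sqrt (1 + phi1 (u' r) ^ 2) - 1) :=
      aux_sphi1_le hs2
    have hFnn' : 0 ≤ ∫ x in (0:ℝ)..u r, f r x := hFnn r (hIcc0R hrI) (u r) (huR r hrI).le
    have hsqge := aux_sqrt_ge_one (phi1 (u' r))
    have hEr : E r = lam * (∫ x in (0:ℝ)..u r, f r x)
        + (Real.sqrt (1 + phi1 (u' r) ^ 2) - 1) := by rw [hEdef]
    have hωr : ω r ≤ Ω := hΩ r hrI
    have hωnn' : 0 ≤ ω r := hωnn r hrI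
    have habs : |lam * Fr r (u r) - c1 / r * (u' r * phi1 (u' r))|
        ≤ lam * |Fr r (u r)| + c1 / r * (u' r * phi1 (u' r)) := by
      have h1 : |lam * Fr r (u r) - c1 / r * (u' r * phi1 (u' r))|
          ≤ |lam * Fr r (u r)| + |c1 / r * (u' r * phi1 (u' r))| := abs_sub _ _
      rw [abs_mul, abs_mul, abs_of_nonneg hlam, abs_of_nonneg (le_of_lt (div_pos hc1 hrpos)),
        abs_of_nonneg hsv0] at h1
      exact h1
    refine habs.trans ?_
    rw [hEr]
    have hd1 : lam * |Fr r (u r)| ≤ Ω * (lam * ∫ x in (0:ℝ)..u r, f r x) := by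
      have := mul_le_mul_of_nonneg_left hFrb hlam
      nlinarith [mul_nonneg hlam hFnn']
    have hd2 : c1 / r * (u' r * phi1 (u' r))
        ≤ (2 * c1 / r) * (Real.sqrt (1 + phi1 (u' r) ^ 2) - 1) := by
      have hcr : 0 ≤ c1 / r := le_of_lt (div_pos hc1 hrpos)
      have := mul_le_mul_of_nonneg_left hsvle hcr
      calc c1 / r * (u' r * phi1 (u' r))
          ≤ c1 / r * (2 * (Real.sqrt (1 + phi1 (u' r) ^ 2) - 1)) := this
        _ = (2 * c1 / r) * (Real.sqrt (1 + phi1 (u' r) ^ 2) - 1) := by ring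
    have hFpos : 0 ≤ lam * ∫ x in (0:ℝ)..u r, f r x := mul_nonneg hlam hFnn'
    have hcr2 : 0 ≤ 2 * c1 / r := by positivity
    nlinarith [hd1, hd2, hΩ0, hFpos, hsqge]
  -- Gronwall on [a, R]
  have hkey : ∀ a : ℝ, δ < a → a < r₀ → ∀ t ∈ Icc a R, E t = 0 := by
    intro a haδ har₀
    have ha0 : 0 < a := lt_of_le_of_lt hδ haδ
    have haR : a ≤ R := le_of_lt (har₀.trans_le hr₀.2)
    set K := Ω + 2 * c1 / a with hKdef
    have hK0 : 0 ≤ K := by positivity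
    have hbound : ∀ x ∈ Ioo δ R, a ≤ x → ∃ d, HasDerivAt E d x ∧ |d| ≤ K * E x := by
      intro x hx hax
      obtain ⟨d, hd, hdb⟩ := hEd x hx
      refine ⟨d, hd, hdb.trans ?_⟩
      have hxpos : 0 < x := lt_of_lt_of_le ha0 hax
      have h1 : 2 * c1 / x ≤ 2 * c1 / a := by
        apply div_le_div_of_nonneg_left (by linarith) ha0 hax
      have h2 : 0 ≤ E x := hE0 x ⟨hx.1.le, hx.2.le⟩
      have hK2 : Ω + 2 * c1 / x ≤ K := by rw [hKdef]; linarith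
      exact mul_le_mul_of_nonneg_right hK2 h2
    have h1 : ∀ t ∈ Icc r₀ R, E t = 0 := by
      have hanti : AntitoneOn (fun t => E t * Real.exp (-K * t)) (Icc r₀ R) := by
        apply antitoneOn_of_deriv_nonpos (convex_Icc r₀ R)
        · exact (hEc.mono (Icc_subset_Icc hr₀.1.le le_rfl)).mul
            (Real.continuous_exp.comp (continuous_const.mul continuous_id)).continuousOn
        · intro x hx
          rw [interior_Icc] at hx
          have hxIoo : x ∈ Ioo δ R := ⟨hr₀.1.trans hx.1, hx.2⟩
          obtain ⟨d, hd, _⟩ := hEd x hxIoo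
          exact ((hd.mul (((hasDerivAt_id x).const_mul (-K)).exp)).differentiableAt).differentiableWithinAt
        · intro x hx
          rw [interior_Icc] at hx
          have hxIoo : x ∈ Ioo δ R := ⟨hr₀.1.trans hx.1, hx.2⟩
          have hax : a ≤ x := le_of_lt (har₀.trans hx.1)
          obtain ⟨d, hd, hdb⟩ := hbound x hxIoo hax
          have hexp : HasDerivAt (fun t : ℝ => Real.exp (-K * t))
              (Real.exp (-K * x) * (-K * 1)) x := ((hasDerivAt_id x).const_mul (-K)).exp
          have hg := hd.mul hexp
          rw [show (fun t => E t * Real.exp (-K * t)) = E * (fun t => Real.exp (-K * t)) from rfl, hg.deriv]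
          have he := Real.exp_pos (-K * x)
          have hEx : 0 ≤ E x := hE0 x ⟨hxIoo.1.le, hxIoo.2.le⟩
          nlinarith [(abs_le.1 hdb).2]
      intro t ht
      have hg := hanti ⟨le_rfl, hr₀.2⟩ ht ht.1
      dsimp only at hg
      have he := Real.exp_pos (-K * t)
      have hEt : 0 ≤ E t := hE0 t ⟨hr₀.1.le.trans ht.1, ht.2⟩
      rw [hEr₀] at hg
      nlinarith
    have h2 : ∀ t ∈ Icc a r₀, E t = 0 := by
      have hmono : MonotoneOn (fun t => E t * Real.exp (K * t)) (Icc a r₀) := by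
        apply monotoneOn_of_deriv_nonneg (convex_Icc a r₀)
        · exact (hEc.mono (Icc_subset_Icc haδ.le hr₀.2)).mul
            (Real.continuous_exp.comp (continuous_const.mul continuous_id)).continuousOn
        · intro x hx
          rw [interior_Icc] at hx
          have hxIoo : x ∈ Ioo δ R := ⟨haδ.trans hx.1, hx.2.trans_le hr₀.2⟩
          obtain ⟨d, hd, _⟩ := hEd x hxIoo
          exact ((hd.mul (((hasDerivAt_id x).const_mul K).exp)).differentiableAt).differentiableWithinAt
        · intro x hx
          rw [interior_Icc] at hx
          have hxIoo : x ∈ Ioo δ R := ⟨haδ.trans hx.1, hx.2.trans_le hr₀.2⟩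
          obtain ⟨d, hd, hdb⟩ := hbound x hxIoo hx.1.le
          have hexp : HasDerivAt (fun t : ℝ => Real.exp (K * t))
              (Real.exp (K * x) * (K * 1)) x := ((hasDerivAt_id x).const_mul K).exp
          have hg := hd.mul hexp
          rw [show (fun t => E t * Real.exp (K * t)) = E * (fun t => Real.exp (K * t)) from rfl, hg.deriv]
          have he := Real.exp_pos (K * x)
          have hEx : 0 ≤ E x := hE0 x ⟨hxIoo.1.le, hxIoo.2.le⟩
          nlinarith [(abs_le.1 hdb).1]
      intro t ht
      have hg := hmono ht ⟨ht.1.trans ht.2, le_rfl⟩ ht.2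
      dsimp only at hg
      have he := Real.exp_pos (K * t)
      have hEt : 0 ≤ E t := hE0 t ⟨haδ.le.trans ht.1, ht.2.trans hr₀.2⟩
      rw [hEr₀] at hg
      nlinarith
    intro t ht
    rcases le_total t r₀ with h | h
    · exact h2 t ⟨ht.1, h⟩
    · exact h1 t ⟨h, ht.2⟩
  -- u' vanishes on (δ, R]
  have hu'0 : ∀ t ∈ Ioc δ R, u' t = 0 := by
    intro t ht
    have h1 : δ < min t r₀ := lt_min ht.1 hr₀.1
    set a := (δ + min t r₀) / 2 with hadef
    have haδ : δ < a := by rw [hadef]; linarith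
    have ham : a < min t r₀ := by rw [hadef]; linarith
    have har₀ : a < r₀ := ham.trans_le (min_le_right _ _)
    have hat : a ≤ t := (ham.trans_le (min_le_left _ _)).le
    have hE0' := hkey a haδ har₀ t ⟨hat, ht.2⟩
    have htI : t ∈ Icc δ R := ⟨ht.1.le, ht.2⟩
    have hF : 0 ≤ lam * ∫ x in (0:ℝ)..u t, f t x :=
      mul_nonneg hlam (hFnn t (hIcc0R htI) (u t) (huR t htI).le)
    have hs : 0 ≤ Real.sqrt (1 + phi1 (u' t) ^ 2) - 1 := by
      linarith [aux_sqrt_ge_one (phi1 (u' t))]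
    have hEt : E t = lam * (∫ x in (0:ℝ)..u t, f t x)
        + (Real.sqrt (1 + phi1 (u' t) ^ 2) - 1) := by rw [hEdef]
    have hzero : Real.sqrt (1 + phi1 (u' t) ^ 2) - 1 = 0 := by
      rw [hEt] at hE0'; linarith
    exact aux_E_zero (hsq t htI) hzero
  -- u vanishes on (δ, R]
  have huzero : ∀ t ∈ Ioc δ R, u t = 0 := by
    intro t ht
    have h1 : δ < min t r₀ := lt_min ht.1 hr₀.1
    set a := (δ + min t r₀) / 2 with hadef
    have haδ : δ < a := by rw [hadef]; linarith
    have ham : a < min t r₀ := by rw [hadef]; linarith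
    have har₀ : a ≤ r₀ := (ham.trans_le (min_le_right _ _)).le
    have hat : a ≤ t := (ham.trans_le (min_le_left _ _)).le
    have hsub : Icc a R ⊆ Icc δ R := Icc_subset_Icc haδ.le le_rfl
    have hz : |u t - u r₀| ≤ 0 * |t - r₀| := by
      have := (convex_Icc a R).norm_image_sub_le_of_norm_hasDerivWithin_le
        (fun z hz => (hu z (hsub hz)).mono hsub)
        (fun z hz => by
          rw [Real.norm_eq_abs, hu'0 z ⟨lt_of_lt_of_le haδ hz.1, hz.2⟩, abs_zero])
        ⟨har₀, hr₀.2⟩ ⟨hat, ht.2⟩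
      simpa [Real.norm_eq_abs] using this
    rw [hur₀, sub_zero, zero_mul] at hz
    exact abs_eq_zero.1 (le_antisymm hz (abs_nonneg _))
  -- conclude, including at δ
  intro r hr
  rcases eq_or_lt_of_le hr.1 with h | h
  · haveI hne : (𝓝[Ioc δ R] δ).NeBot := by
      rw [← mem_closure_iff_nhdsWithin_neBot, closure_Ioc hδR.ne]
      exact ⟨le_rfl, hδR.le⟩
    have h1 : Tendsto u (𝓝[Ioc δ R] δ) (𝓝 (u δ)) :=
      ((hu δ ⟨le_rfl, hδR.le⟩).continuousWithinAt).mono Ioc_subset_Icc_self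
    have h2 : Tendsto u (𝓝[Ioc δ R] δ) (𝓝 0) := by
      refine Tendsto.congr' ?_ tendsto_const_nhds
      filter_upwards [self_mem_nhdsWithin] with x hx
      exact (huzero x hx).symm
    rw [← h]
    exact tendsto_nhds_unique h1 h2
  · exact huzero r ⟨h, hr.2⟩
end

section
/- Let N ≥ 2 be an integer, 0 < δ < R, λ ≥ 0, and let f : [δ,R] × ℝ → ℝ be continuous. Define h : ℝ → ℝ by h(y) = (1−y²)^{3/2} for |y| ≤ 1 and h(y) = 0 for |y| > 1. Then a function u ∈ C¹([δ,R]) with r ↦ r^{N−1}u'(r) continuously differentiable satisfies −(r^{N−1}u')' = λ r^{N−1} f(r,u) h(u') − (N−1) r^{N−2} (u')³ on (δ,R) with u'(δ) = 0 = u(R) if and only if u satisfies |u'(r)| < 1 for all r ∈ [δ,R], r ↦ r^{N−1}φ₁(u'(r)) is continuously differentiable, (r^{N−1}φ₁(u'))' + λ r^{N−1} f(r,u) = 0 on (δ,R), and u'(δ) = 0 = u(R). In particular, every solution u of the first problem satisfies sup_{r∈[δ,R]} |u'(r)| < 1. -/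
open Set Filter Topology

set_option maxHeartbeats 1000000

lemma aux_sq_lt_one_of_abs_lt {s : ℝ} (h : |s| < 1) : s^2 < 1 := by
  nlinarith [sq_abs s, abs_nonneg s]

lemma aux_rpow_three_half {x : ℝ} (hx : 0 ≤ x) : x ^ ((3:ℝ)/2) = x * Real.sqrt x := by
  rcases eq_or_lt_of_le hx with h | h
  · simp [← h, Real.zero_rpow (by norm_num : (3:ℝ)/2 ≠ 0)]
  · rw [Real.sqrt_eq_rpow, ← Real.rpow_one_add' (le_of_lt h) (by norm_num)]
    norm_num

lemma aux_hcap_eq {s : ℝ} (h : |s| ≤ 1) : hcap s = (1 - s^2) * Real.sqrt (1 - s^2) := by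
  have h2 : (0:ℝ) ≤ 1 - s^2 := by nlinarith [sq_abs s, abs_nonneg s]
  rw [hcap, if_pos h, aux_rpow_three_half h2]

lemma aux_one_add_phi1_sq {s : ℝ} (h : |s| < 1) : 1 + (phi1 s)^2 = 1/(1-s^2) := by
  have h1 : (0:ℝ) < 1 - s^2 := by nlinarith [aux_sq_lt_one_of_abs_lt h]
  have h2 : 0 < Real.sqrt (1 - s^2) := Real.sqrt_pos.2 h1
  have h3 : Real.sqrt (1-s^2) ^ 2 = 1 - s^2 := Real.sq_sqrt h1.le
  unfold phi1
  rw [div_pow, h3]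
  field_simp; ring

lemma aux_phi1_inv_eq {s : ℝ} (h : |s| < 1) : phi1 s / Real.sqrt (1 + (phi1 s)^2) = s := by
  have h1 : (0:ℝ) < 1 - s^2 := by nlinarith [aux_sq_lt_one_of_abs_lt h]
  have h2 : 0 < Real.sqrt (1 - s^2) := Real.sqrt_pos.2 h1
  rw [aux_one_add_phi1_sq h, one_div, Real.sqrt_inv, div_inv_eq_mul]
  unfold phi1
  field_simp

lemma aux_pow_div_deriv {n : ℕ} {δ R r G : ℝ} (hδ : 0 < δ) {F q : ℝ → ℝ}
    (hr : r ∈ Icc δ R) (hF : HasDerivWithinAt F G (Icc δ R) r)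
    (hq : ∀ t ∈ Icc δ R, q t = F t / t^(n+1)) :
    HasDerivWithinAt q (G / r^(n+1) - ((n:ℝ)+1) * q r / r) (Icc δ R) r := by
  have hr0 : (0:ℝ) < r := lt_of_lt_of_le hδ hr.1
  have hpow : r ^ (n+1) ≠ 0 := pow_ne_zero _ hr0.ne'
  have h2 : HasDerivWithinAt (fun t : ℝ => t ^ (n+1)) ((↑(n+1) : ℝ) * r^(n+1-1)) (Icc δ R) r :=
    (hasDerivAt_pow (n+1) r).hasDerivWithinAt
  have h4 := (hF.div h2 hpow).congr hq (hq r hr)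
  refine h4.congr_deriv ?_
  rw [hq r hr]
  simp only [Nat.add_sub_cancel]
  push_cast
  field_simp
  ring

lemma aux_aux_core_lt_one (n : ℕ) (δ R lam : ℝ) (hδ : 0 < δ) (hδR : δ < R) (hlam : 0 ≤ lam)
    (φ : ℝ → ℝ) (hφ : ContinuousOn φ (Icc δ R))
    (u' : ℝ → ℝ) (hu'c : ContinuousOn u' (Icc δ R))
    (g : ℝ → ℝ)
    (hd : ∀ r ∈ Ioo δ R,
      HasDerivWithinAt u' (g r / r^(n+1) - ((n:ℝ)+1) * u' r / r) (Icc δ R) r)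
    (hode : ∀ r ∈ Ioo δ R,
      -g r = lam * r^(n+1) * φ r * hcap (u' r) - ((n:ℝ)+1) * r^n * (u' r)^3)
    (hbd : u' δ = 0) :
    ∀ r ∈ Icc δ R, |u' r| < 1 := by
  by_contra hcon
  push_neg at hcon
  obtain ⟨r₁, hr₁, hr₁'⟩ := hcon
  set S : Set ℝ := Icc δ R ∩ (fun r => |u' r|) ⁻¹' (Ici 1) with hS
  have hSne : S.Nonempty := ⟨r₁, hr₁, hr₁'⟩
  have hSclosed : IsClosed S :=
    (hu'c.abs).preimage_isClosed_of_isClosed isClosed_Icc isClosed_Ici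
  have hSbdd : BddBelow S := ⟨δ, fun x hx => hx.1.1⟩
  set r₀ := sInf S with hr₀def
  have hr₀S : r₀ ∈ S := hSclosed.csInf_mem hSne hSbdd
  have hr₀Icc : r₀ ∈ Icc δ R := hr₀S.1
  have hr₀abs : 1 ≤ |u' r₀| := hr₀S.2
  have hδr₀ : δ < r₀ := by
    rcases lt_or_eq_of_le hr₀Icc.1 with h | h
    · exact h
    · exfalso; rw [← h, hbd] at hr₀abs; norm_num at hr₀abs
  have hlt : ∀ r ∈ Ico δ r₀, |u' r| < 1 := by
    intro r hr
    by_contra hge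
    push_neg at hge
    have : r₀ ≤ r := csInf_le hSbdd ⟨⟨hr.1, hr.2.le.trans hr₀Icc.2⟩, hge⟩
    exact absurd hr.2 (not_lt.2 this)
  obtain ⟨M0, hM0⟩ := isCompact_Icc.exists_bound_of_continuousOn hφ
  set M := max M0 0 with hM
  have hMnn : 0 ≤ M := le_max_right _ _
  have hMb : ∀ r ∈ Icc δ R, |φ r| ≤ M := fun r hr => (hM0 r hr).trans (le_max_left _ _)
  set C := 2*lam*M + 2*((n:ℝ)+1)/δ with hC
  have hCnn : 0 ≤ C := by positivity
  set q : ℝ → ℝ := fun r => (1 - u' r ^ 2) * Real.exp (C * r) with hq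
  have hkey : ∀ x ∈ Ioo δ r₀, HasDerivAt q
      ((-(2 * u' x * (g x / x^(n+1) - ((n:ℝ)+1) * u' x / x)) + C * (1 - u' x ^ 2))
        * Real.exp (C * x)) x ∧
      0 ≤ (-(2 * u' x * (g x / x^(n+1) - ((n:ℝ)+1) * u' x / x)) + C * (1 - u' x ^ 2))
        * Real.exp (C * x) := by
    intro x hx
    have hxIoo : x ∈ Ioo δ R := ⟨hx.1, lt_of_lt_of_le hx.2 hr₀Icc.2⟩
    have hxpos : 0 < x := hδ.trans hx.1
    have hmem : Icc δ R ∈ nhds x := Icc_mem_nhds hxIoo.1 hxIoo.2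
    have hu'x : HasDerivAt u' (g x / x^(n+1) - ((n:ℝ)+1) * u' x / x) x :=
      (hd x hxIoo).hasDerivAt hmem
    have hp : HasDerivAt (fun t => 1 - u' t ^ 2)
        (-(2 * u' x * (g x / x^(n+1) - ((n:ℝ)+1) * u' x / x))) x := by
      have := (hu'x.pow 2).const_sub 1
      refine this.congr_deriv ?_
      push_cast; ring
    have he : HasDerivAt (fun t => Real.exp (C * t)) (C * Real.exp (C * x)) x := by
      have h1 : HasDerivAt (fun t : ℝ => C * t) C x := by
        simpa using (hasDerivAt_id x).const_mul C
      have h2 := (Real.hasDerivAt_exp (C * x)).comp x h1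
      refine h2.congr_deriv ?_
      ring
    have hq' := hp.mul he
    refine ⟨by refine hq'.congr_deriv ?_; ring, ?_⟩
    have habs : |u' x| < 1 := hlt x ⟨hx.1.le, hx.2⟩
    have hu1 : -1 ≤ u' x := neg_le_of_abs_le habs.le
    have hu2 : u' x ≤ 1 := le_of_abs_le habs.le
    have hppos : 0 < 1 - u' x ^ 2 := by nlinarith [sq_abs (u' x), abs_nonneg (u' x)]
    have hcapv : hcap (u' x) = (1 - u' x^2) * Real.sqrt (1 - u' x^2) := aux_hcap_eq habs.le
    have hgx : g x = ((n:ℝ)+1) * x^n * (u' x)^3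
        - lam * x^(n+1) * φ x * hcap (u' x) := by
      have := hode x hxIoo; linarith
    have hfb := hMb x ⟨hxIoo.1.le, hxIoo.2.le⟩
    apply mul_nonneg _ (Real.exp_nonneg _)
    set s := u' x with hsdef
    set p := 1 - s ^ 2 with hpdef
    set e := Real.sqrt p with hedef
    have hf1 : -M ≤ φ x := neg_le_of_abs_le hfb
    have hf2 : φ x ≤ M := le_of_abs_le hfb
    have hele : e ≤ 1 := by
      rw [hedef, show (1:ℝ) = Real.sqrt 1 by simp]
      apply Real.sqrt_le_sqrt
      nlinarith [sq_nonneg s]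
    have henn : 0 ≤ e := Real.sqrt_nonneg _
    have hkey2 : g x / x ^ (n+1) = ((n:ℝ)+1) * s^3 / x - lam * φ x * (p * e) := by
      rw [hgx, hcapv]
      field_simp
      ring
    have heq : -(2 * s * (g x / x ^ (n + 1) - ((n:ℝ) + 1) * s / x)) + C * p
        = (2*lam*(s*φ x)*(p*e) + 2*lam*M*p)
          + 2*((n:ℝ)+1)*s^2*p/x + 2*((n:ℝ)+1)/δ*p := by
      rw [hkey2, hC, hpdef]
      field_simp
      ring
    rw [heq]
    have term1 : 0 ≤ 2*lam*(s*φ x)*(p*e) + 2*lam*M*p := by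
      have h1 : -M ≤ s * φ x := by nlinarith
      have h2 : p*e ≤ p := by nlinarith
      have h3 : 0 ≤ p*e := by positivity
      have hstep1 : -(M*p) ≤ -(M*(p*e)) := by nlinarith
      have hstep2 : -(M*(p*e)) ≤ s*φ x*(p*e) := by
        have := mul_le_mul_of_nonneg_right h1 h3
        linarith
      have hstep3 : (0:ℝ) ≤ s*φ x*(p*e) + M*p := by linarith
      nlinarith [mul_nonneg (by linarith : (0:ℝ) ≤ 2*lam) hstep3]
    have h4 : 0 ≤ 2*((n:ℝ)+1)*s^2*p/x := by positivity
    have h5 : 0 ≤ 2*((n:ℝ)+1)/δ*p := by positivity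
    exact add_nonneg (add_nonneg term1 h4) h5
  have hmono : MonotoneOn q (Icc δ r₀) := by
    apply monotoneOn_of_deriv_nonneg (convex_Icc δ r₀)
    · exact ((continuousOn_const.sub (hu'c.pow 2)).mul
        ((Real.continuous_exp.comp (continuous_const.mul continuous_id)).continuousOn)).mono
        (Icc_subset_Icc le_rfl hr₀Icc.2)
    · rw [interior_Icc]
      exact fun x hx => ((hkey x hx).1.differentiableAt.differentiableWithinAt)
    · rw [interior_Icc]
      intro x hx
      rw [(hkey x hx).1.deriv]
      exact (hkey x hx).2
  have h1 : q δ ≤ q r₀ :=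
    hmono ⟨le_rfl, hδr₀.le⟩ ⟨hδr₀.le, le_rfl⟩ hδr₀.le
  have hqδ : q δ = Real.exp (C*δ) := by simp [hq, hbd]
  have hqr₀ : q r₀ ≤ 0 := by
    have h2 : 1 - u' r₀ ^ 2 ≤ 0 := by nlinarith [sq_abs (u' r₀)]
    exact mul_nonpos_of_nonpos_of_nonneg h2 (Real.exp_nonneg _)
  rw [hqδ] at h1
  linarith [Real.exp_pos (C*δ)]


lemma aux_fwd (n : ℕ) (δ R lam : ℝ) (hδ : 0 < δ) (hδR : δ < R) (hlam : 0 ≤ lam)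
    (φ : ℝ → ℝ) (hφ : ContinuousOn φ (Icc δ R))
    (u' : ℝ → ℝ) (hu'c : ContinuousOn u' (Icc δ R))
    (g : ℝ → ℝ) (hgc : ContinuousOn g (Icc δ R))
    (hgd : ∀ r ∈ Icc δ R, HasDerivWithinAt (fun t => t^(n+1) * u' t) (g r) (Icc δ R) r)
    (hode : ∀ r ∈ Ioo δ R,
      -g r = lam * r^(n+1) * φ r * hcap (u' r) - ((n:ℝ)+1) * r^n * (u' r)^3)
    (hbd : u' δ = 0) :
    (∀ r ∈ Icc δ R, |u' r| < 1) ∧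
    ∃ w' : ℝ → ℝ, ContinuousOn w' (Icc δ R) ∧
      (∀ r ∈ Icc δ R, HasDerivWithinAt (fun t => t^(n+1) * phi1 (u' t)) (w' r) (Icc δ R) r) ∧
      ∀ r ∈ Ioo δ R, w' r + lam * r^(n+1) * φ r = 0 := by
  -- derivative of u'
  have hd : ∀ r ∈ Icc δ R,
      HasDerivWithinAt u' (g r / r^(n+1) - ((n:ℝ)+1) * u' r / r) (Icc δ R) r := by
    intro r hr
    refine aux_pow_div_deriv hδ hr (hgd r hr) (fun t ht => ?_)
    have ht0 : (0:ℝ) < t := lt_of_lt_of_le hδ ht.1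
    field_simp
  have habs : ∀ r ∈ Icc δ R, |u' r| < 1 :=
    aux_aux_core_lt_one n δ R lam hδ hδR hlam φ hφ u' hu'c g
      (fun r hr => hd r ⟨hr.1.le, hr.2.le⟩) hode hbd
  refine ⟨habs, ?_⟩
  have hppos : ∀ r ∈ Icc δ R, (0:ℝ) < 1 - u' r ^ 2 := by
    intro r hr
    nlinarith [habs r hr, sq_abs (u' r), abs_nonneg (u' r)]
  have hEpos : ∀ r ∈ Icc δ R, (0:ℝ) < Real.sqrt (1 - u' r ^ 2) :=
    fun r hr => Real.sqrt_pos.2 (hppos r hr)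
  -- the derivative function
  set w' : ℝ → ℝ := fun r =>
    (g r * Real.sqrt (1 - u' r ^ 2) -
      (r^(n+1) * u' r) * ((1 / (2 * Real.sqrt (1 - u' r ^ 2))) *
        (-(2 * u' r * (g r / r^(n+1) - ((n:ℝ)+1) * u' r / r)))))
      / (Real.sqrt (1 - u' r ^ 2))^2 with hw'def
  have hw'd : ∀ r ∈ Icc δ R,
      HasDerivWithinAt (fun t => t^(n+1) * phi1 (u' t)) (w' r) (Icc δ R) r := by
    intro r hr
    have hr0 : (0:ℝ) < r := lt_of_lt_of_le hδ hr.1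
    -- derivative of p := 1 - u'²
    have hp : HasDerivWithinAt (fun t => 1 - u' t ^ 2)
        (-(2 * u' r * (g r / r^(n+1) - ((n:ℝ)+1) * u' r / r))) (Icc δ R) r := by
      have := ((hd r hr).pow 2).const_sub 1
      refine this.congr_deriv ?_
      push_cast; ring
    -- derivative of sqrt(p)
    have hsq : HasDerivWithinAt (fun t => Real.sqrt (1 - u' t ^ 2))
        ((1 / (2 * Real.sqrt (1 - u' r ^ 2))) *
          (-(2 * u' r * (g r / r^(n+1) - ((n:ℝ)+1) * u' r / r)))) (Icc δ R) r :=
      (Real.hasDerivAt_sqrt (hppos r hr).ne').comp_hasDerivWithinAt r hp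
    have hdiv := (hgd r hr).div hsq (hEpos r hr).ne'
    refine hdiv.congr (fun t ht => ?_) ?_
    · unfold phi1; rw [Pi.div_apply, mul_div_assoc]
    · unfold phi1; rw [Pi.div_apply, mul_div_assoc]
  refine ⟨w', ?_, hw'd, ?_⟩
  · -- continuity of w'
    have hEc : ContinuousOn (fun r => Real.sqrt (1 - u' r ^ 2)) (Icc δ R) :=
      (continuousOn_const.sub (hu'c.pow 2)).sqrt
    have hpowc : ContinuousOn (fun r : ℝ => r ^ (n+1)) (Icc δ R) :=
      (continuous_pow _).continuousOn
    have hrne : ∀ r ∈ Icc δ R, (r:ℝ) ≠ 0 := fun r hr => (lt_of_lt_of_le hδ hr.1).ne'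
    have hpowne : ∀ r ∈ Icc δ R, (r:ℝ)^(n+1) ≠ 0 := fun r hr => pow_ne_zero _ (hrne r hr)
    have c1 : ContinuousOn (fun x : ℝ => g x / x^(n+1) - ((n:ℝ)+1)*u' x/x) (Icc δ R) := by
      apply ContinuousOn.sub (hgc.div hpowc hpowne)
      exact (continuousOn_const.mul hu'c).div continuousOn_id hrne
    have c2 : ContinuousOn (fun x => 1/(2*Real.sqrt (1 - u' x^2)) *
        (-(2*u' x*(g x/x^(n+1) - ((n:ℝ)+1)*u' x/x)))) (Icc δ R) := by
      apply ContinuousOn.mul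
      · exact continuousOn_const.div (continuousOn_const.mul hEc)
          (fun r hr => by have := hEpos r hr; positivity)
      · exact ((continuousOn_const.mul hu'c).mul c1).neg
    rw [hw'def]
    apply ContinuousOn.div
    · exact (hgc.mul hEc).sub ((hpowc.mul hu'c).mul c2)
    · exact hEc.pow 2
    · exact fun r hr => pow_ne_zero _ (hEpos r hr).ne'
  · -- the ODE
    intro r hr
    have hrIcc : r ∈ Icc δ R := ⟨hr.1.le, hr.2.le⟩
    have hr0 : (0:ℝ) < r := hδ.trans hr.1
    set s := u' r with hsdef
    set E := Real.sqrt (1 - s ^ 2) with hEdef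
    have hE : 0 < E := hEpos r hrIcc
    have hE2 : E^2 = 1 - s^2 := Real.sq_sqrt (hppos r hrIcc).le
    have hstep1 : w' r = (g r * (E^2 + s^2) - ((n:ℝ)+1) * r^n * s^3) / E^3 := by
      rw [hw'def]; simp only [← hsdef, ← hEdef]
      have hrn : (r:ℝ)^(n+1) ≠ 0 := pow_ne_zero _ hr0.ne'
      field_simp
      ring
    have habs' : |s| < 1 := habs r hrIcc
    have hgval : g r = ((n:ℝ)+1) * r^n * s^3 - lam * r^(n+1) * φ r * (E^2 * E) := by
      have h1 := hode r hr
      rw [← hsdef] at h1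
      rw [aux_hcap_eq habs'.le, ← hEdef, ← hE2] at h1
      linarith [h1]
    have hEs : E^2 + s^2 = 1 := by rw [hE2]; ring
    rw [hstep1, hEs, hgval]
    field_simp
    ring


lemma aux_bwd (n : ℕ) (δ R lam : ℝ) (hδ : 0 < δ) (hδR : δ < R)
    (φ : ℝ → ℝ)
    (u' : ℝ → ℝ) (hu'c : ContinuousOn u' (Icc δ R))
    (habs : ∀ r ∈ Icc δ R, |u' r| < 1)
    (w' : ℝ → ℝ) (hw'c : ContinuousOn w' (Icc δ R))
    (hwd : ∀ r ∈ Icc δ R, HasDerivWithinAt (fun t => t^(n+1) * phi1 (u' t)) (w' r) (Icc δ R) r)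
    (hode : ∀ r ∈ Ioo δ R, w' r + lam * r^(n+1) * φ r = 0) :
    ∃ g : ℝ → ℝ, ContinuousOn g (Icc δ R) ∧
      (∀ r ∈ Icc δ R, HasDerivWithinAt (fun t => t^(n+1) * u' t) (g r) (Icc δ R) r) ∧
      ∀ r ∈ Ioo δ R, -g r = lam * r^(n+1) * φ r * hcap (u' r) - ((n:ℝ)+1) * r^n * (u' r)^3 := by
  have hrne : ∀ r ∈ Icc δ R, (r:ℝ) ≠ 0 := fun r hr => (lt_of_lt_of_le hδ hr.1).ne'
  have hpowne : ∀ r ∈ Icc δ R, (r:ℝ)^(n+1) ≠ 0 := fun r hr => pow_ne_zero _ (hrne r hr)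
  set b : ℝ → ℝ := fun t => phi1 (u' t) with hbdef
  set b' : ℝ → ℝ := fun r => w' r / r^(n+1) - ((n:ℝ)+1) * b r / r with hb'def
  have hb : ∀ r ∈ Icc δ R, HasDerivWithinAt b (b' r) (Icc δ R) r := by
    intro r hr
    refine aux_pow_div_deriv hδ hr (hwd r hr) (fun t ht => ?_)
    rw [hbdef, mul_comm, mul_div_assoc, div_self (hpowne t ht), mul_one]
  have hbc : ContinuousOn b (Icc δ R) := fun r hr => (hb r hr).continuousWithinAt
  have hSpos : ∀ r ∈ Icc δ R, (0:ℝ) < 1 + b r ^ 2 := fun r hr => by positivity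
  have hsqSpos : ∀ r ∈ Icc δ R, (0:ℝ) < Real.sqrt (1 + b r ^ 2) :=
    fun r hr => Real.sqrt_pos.2 (hSpos r hr)
  -- derivative of u'
  set d : ℝ → ℝ := fun r =>
    (b' r * Real.sqrt (1 + b r ^ 2) -
      b r * ((1 / (2 * Real.sqrt (1 + b r ^ 2))) * (2 * b r * b' r)))
      / (Real.sqrt (1 + b r ^ 2))^2 with hddef
  have hd : ∀ r ∈ Icc δ R, HasDerivWithinAt u' (d r) (Icc δ R) r := by
    intro r hr
    have hS : HasDerivWithinAt (fun t => 1 + b t ^ 2) (2 * b r * b' r) (Icc δ R) r := by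
      have := ((hb r hr).pow 2).const_add 1
      refine this.congr_deriv ?_
      push_cast; ring
    have hsq : HasDerivWithinAt (fun t => Real.sqrt (1 + b t ^ 2))
        ((1 / (2 * Real.sqrt (1 + b r ^ 2))) * (2 * b r * b' r)) (Icc δ R) r :=
      (Real.hasDerivAt_sqrt (hSpos r hr).ne').comp_hasDerivWithinAt r hS
    have hdiv := (hb r hr).div hsq (hsqSpos r hr).ne'
    exact hdiv.congr (fun t ht => (aux_phi1_inv_eq (habs t ht)).symm)
      (aux_phi1_inv_eq (habs r hr)).symm
  set g : ℝ → ℝ := fun r => ((n:ℝ)+1) * r^n * u' r + r^(n+1) * d r with hgdef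
  have hgd : ∀ r ∈ Icc δ R, HasDerivWithinAt (fun t => t^(n+1) * u' t) (g r) (Icc δ R) r := by
    intro r hr
    have hpow : HasDerivWithinAt (fun t : ℝ => t ^ (n+1)) ((↑(n+1) : ℝ) * r^(n+1-1)) (Icc δ R) r :=
      (hasDerivAt_pow (n+1) r).hasDerivWithinAt
    have := hpow.mul (hd r hr)
    refine this.congr_deriv ?_
    simp only [Nat.add_sub_cancel]
    push_cast; ring
  have hgc : ContinuousOn g (Icc δ R) := by
    have hb'c : ContinuousOn b' (Icc δ R) := by
      apply ContinuousOn.sub (hw'c.div (continuous_pow _).continuousOn hpowne)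
      exact (continuousOn_const.mul hbc).div continuousOn_id hrne
    have hSc : ContinuousOn (fun r => Real.sqrt (1 + b r ^ 2)) (Icc δ R) :=
      (continuousOn_const.add (hbc.pow 2)).sqrt
    have hdc : ContinuousOn d (Icc δ R) := by
      rw [hddef]
      apply ContinuousOn.div
      · apply ContinuousOn.sub (hb'c.mul hSc)
        exact hbc.mul ((continuousOn_const.div (continuousOn_const.mul hSc)
          (fun r hr => (mul_pos two_pos (hsqSpos r hr)).ne')).mul
          ((continuousOn_const.mul hbc).mul hb'c))
      · exact hSc.pow 2
      · exact fun r hr => pow_ne_zero _ (hsqSpos r hr).ne'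
    rw [hgdef]
    exact ((continuousOn_const.mul (continuous_pow n).continuousOn).mul hu'c).add
      ((continuous_pow (n+1)).continuousOn.mul hdc)
  refine ⟨g, hgc, hgd, ?_⟩
  intro r hr
  have hrIcc : r ∈ Icc δ R := ⟨hr.1.le, hr.2.le⟩
  have hr0 : (0:ℝ) < r := hδ.trans hr.1
  set s := u' r with hsdef
  have habs' : |s| < 1 := habs r hrIcc
  have hppos : (0:ℝ) < 1 - s^2 := by nlinarith [aux_sq_lt_one_of_abs_lt habs']
  set E := Real.sqrt (1 - s ^ 2) with hEdef
  have hE : 0 < E := Real.sqrt_pos.2 hppos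
  have hE2 : E^2 = 1 - s^2 := Real.sq_sqrt hppos.le
  set B := b r with hBdef
  have hBs : B = s / E := rfl
  have hBE : B * E = s := by rw [hBs]; field_simp
  have hS1 : Real.sqrt (1 + B^2) = 1/E := by
    rw [show (1 + B^2 : ℝ) = 1/(1-s^2) from aux_one_add_phi1_sq habs', ← hE2, one_div,
      Real.sqrt_inv, Real.sqrt_sq hE.le]
    exact inv_eq_one_div E
  have h1sq : B^2 * E^2 = s^2 := by linear_combination (B*E + s) * hBE
  -- value of d r
  have hdr : d r = b' r * E^3 := by
    have hA : d r = b' r * E - B^2 * b' r * E^3 := by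
      rw [hddef]
      simp only [← hBdef]
      rw [hS1]
      field_simp
    rw [hA]
    linear_combination (-(b' r * E)) * h1sq + (-(b' r * E)) * hE2
  -- value of w', b'
  have hw'r : w' r = -(lam * r^(n+1) * φ r) := by
    have := hode r hr; linarith
  have hb'r : b' r = -(lam * φ r) - ((n:ℝ)+1) * B / r := by
    have h1 : b' r = w' r / r^(n+1) - ((n:ℝ)+1) * B / r := rfl
    rw [h1, hw'r]
    have h2 : -(lam * r^(n+1) * φ r) / r^(n+1) = -(lam * φ r) := by
      field_simp [hr0.ne']
    rw [h2]
  have hcapv : hcap s = E^2 * E := by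
    rw [aux_hcap_eq habs'.le, ← hEdef, ← hE2]
  rw [hgdef]
  simp only [← hsdef]
  rw [hdr, hb'r, hcapv]
  have hfrac : r^(n+1) * ((-(lam*φ r) - ((n:ℝ)+1)*B/r)*E^3)
      = r^(n+1)*(-(lam*φ r))*E^3 - ((n:ℝ)+1)*r^n*B*E^3 := by
    field_simp
    ring
  rw [hfrac]
  linear_combination (((n:ℝ)+1)*r^n*s) * hE2 + (((n:ℝ)+1)*r^n*E^2) * hBE


/-- equivalent formulation, Subsection 3.2. A `C¹` function
`u` with `r ↦ r^{N-1} u'` continuously differentiable solves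
`-(r^{N-1} u')' = λ r^{N-1} f(r,u) h(u') - (N-1) r^{N-2} (u')³` with
`u'(δ) = 0 = u(R)` if and only if it solves the Minkowski-curvature problem
`(r^{N-1} φ₁(u'))' + λ r^{N-1} f(r,u) = 0` (with `|u'| < 1`) with the same
boundary conditions; moreover every solution of the first problem satisfies
`sup |u'| < 1`. -/
theorem stmt13 (N : ℕ) (hN : 2 ≤ N) (δ R lam : ℝ) (hδ : 0 < δ) (hδR : δ < R) (hlam : 0 ≤ lam)
    (f : ℝ → ℝ → ℝ)
    (hfc : ContinuousOn (fun p : ℝ × ℝ => f p.1 p.2) (Icc δ R ×ˢ (univ : Set ℝ)))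
    (u u' : ℝ → ℝ)
    (hu : ∀ r ∈ Icc δ R, HasDerivWithinAt u (u' r) (Icc δ R) r)
    (hu'c : ContinuousOn u' (Icc δ R)) :
    (((∃ g : ℝ → ℝ, ContinuousOn g (Icc δ R) ∧
        (∀ r ∈ Icc δ R,
          HasDerivWithinAt (fun t => t ^ (N - 1) * u' t) (g r) (Icc δ R) r) ∧
        ∀ r ∈ Ioo δ R, -g r =
          lam * r ^ (N - 1) * f r (u r) * hcap (u' r)
            - (N - 1 : ℝ) * r ^ (N - 2) * (u' r) ^ 3) ∧
      u' δ = 0 ∧ u R = 0) ↔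
    ((∀ r ∈ Icc δ R, |u' r| < 1) ∧
      (∃ w' : ℝ → ℝ, ContinuousOn w' (Icc δ R) ∧
        (∀ r ∈ Icc δ R,
          HasDerivWithinAt (fun t => t ^ (N - 1) * phi1 (u' t)) (w' r) (Icc δ R) r) ∧
        ∀ r ∈ Ioo δ R, w' r + lam * r ^ (N - 1) * f r (u r) = 0) ∧
      u' δ = 0 ∧ u R = 0)) ∧
    -- in particular, solutions of the first problem satisfy `sup |u'| < 1`
    (((∃ g : ℝ → ℝ, ContinuousOn g (Icc δ R) ∧
        (∀ r ∈ Icc δ R,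
          HasDerivWithinAt (fun t => t ^ (N - 1) * u' t) (g r) (Icc δ R) r) ∧
        ∀ r ∈ Ioo δ R, -g r =
          lam * r ^ (N - 1) * f r (u r) * hcap (u' r)
            - (N - 1 : ℝ) * r ^ (N - 2) * (u' r) ^ 3) ∧
      u' δ = 0 ∧ u R = 0) →
      ∃ c : ℝ, c < 1 ∧ ∀ r ∈ Icc δ R, |u' r| ≤ c) := by
  obtain ⟨n, rfl⟩ : ∃ n, N = n + 2 := ⟨N - 2, by omega⟩
  have hucont : ContinuousOn u (Icc δ R) := fun r hr => (hu r hr).continuousWithinAt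
  have hφc : ContinuousOn (fun r => f r (u r)) (Icc δ R) := by
    have h1 : ContinuousOn (fun r : ℝ => ((r, u r) : ℝ × ℝ)) (Icc δ R) :=
      continuousOn_id.prodMk hucont
    exact hfc.comp h1 (fun r hr => ⟨hr, mem_univ _⟩)
  have FWD : ((∃ g : ℝ → ℝ, ContinuousOn g (Icc δ R) ∧
        (∀ r ∈ Icc δ R,
          HasDerivWithinAt (fun t => t ^ (n + 2 - 1) * u' t) (g r) (Icc δ R) r) ∧
        ∀ r ∈ Ioo δ R, -g r =
          lam * r ^ (n + 2 - 1) * f r (u r) * hcap (u' r)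
            - ((n + 2 : ℕ) - 1 : ℝ) * r ^ (n + 2 - 2) * (u' r) ^ 3) ∧
      u' δ = 0 ∧ u R = 0) →
      ((∀ r ∈ Icc δ R, |u' r| < 1) ∧
      (∃ w' : ℝ → ℝ, ContinuousOn w' (Icc δ R) ∧
        (∀ r ∈ Icc δ R,
          HasDerivWithinAt (fun t => t ^ (n + 1) * phi1 (u' t)) (w' r) (Icc δ R) r) ∧
        ∀ r ∈ Ioo δ R, w' r + lam * r ^ (n + 1) * f r (u r) = 0)) := by
    rintro ⟨⟨g, hgc, hgd, hgode⟩, hbd1, hbd2⟩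
    have hgode' : ∀ r ∈ Ioo δ R, -g r = lam * r^(n+1) * (f r (u r)) * hcap (u' r)
        - ((n:ℝ)+1) * r^n * (u' r)^3 := by
      intro r hr
      have h1 := hgode r hr
      simp only [show n+2-1 = n+1 from rfl, show n+2-2 = n from rfl] at h1
      push_cast at h1 ⊢
      linear_combination h1
    obtain ⟨habs, w', hw'c, hw'd, hw'ode⟩ :=
      aux_fwd n δ R lam hδ hδR hlam _ hφc u' hu'c g hgc hgd hgode' hbd1
    exact ⟨habs, w', hw'c, hw'd, hw'ode⟩
  refine ⟨⟨fun h => ⟨(FWD h).1, (FWD h).2, h.2.1, h.2.2⟩, ?_⟩, fun h => ?_⟩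
  · rintro ⟨habs, ⟨w', hw'c, hw'd, hw'ode⟩, hbd1, hbd2⟩
    obtain ⟨g, hgc, hgd, hgode⟩ :=
      aux_bwd n δ R lam hδ hδR _ u' hu'c habs w' hw'c hw'd hw'ode
    refine ⟨⟨g, hgc, hgd, fun r hr => ?_⟩, hbd1, hbd2⟩
    have h1 := hgode r hr
    simp only [show n+2-1 = n+1 from rfl, show n+2-2 = n from rfl]
    push_cast
    linear_combination h1
  · have habs := (FWD h).1
    obtain ⟨x, hxmem, hxmax⟩ :=
      isCompact_Icc.exists_isMaxOn (nonempty_Icc.2 hδR.le) hu'c.abs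
    exact ⟨|u' x|, habs x hxmem, fun r hr => hxmax hr⟩
end
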